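/- arXiv:1909.13532 — 3 statements merged into one kernel-verified Lean document; each statement's English description precedes it below -/
import Mathlib

section
/- For every integer n with n = 6 or n ≥ 8, the graph D_n contains exactly 2n² − 10n + 12 copies of C₅; the graph D₇ contains exactly 41 copies of C₅. Equivalently, for n ≥ 8, D_n contains exactly 2(n−2)(n−3) copies of C₅. -/
open SimpleGraph

/-- The number of copies of the 5-cycle `C₅` in `G`, i.e. the number of (not necessarily
induced) subgraphs of `G` isomorphic to the cycle on 5 vertices; each 5-cycle is counted
once. -/
noncomputable def SimpleGraph.c5Count {V : Type*} (G : SimpleGraph V) : ℕ :=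
  Nat.card {H : G.Subgraph // Nonempty (H.coe ≃g cycleGraph 5)}

/-- The graph `D n` on `n` vertices: a cycle on the `n - 2` vertices `0, …, n-3`
(vertex `i` adjacent to vertex `(i+1) mod (n-2)`), together with two mutually nonadjacent
vertices `n-2` and `n-1`, each adjacent to every vertex of the cycle. -/
def Dgraph (n : ℕ) : SimpleGraph (Fin n) :=
  SimpleGraph.fromRel (fun a b =>
    ((a : ℕ) < n - 2 ∧ (b : ℕ) < n - 2 ∧ ((a : ℕ) + 1) % (n - 2) = (b : ℕ)) ∨
    ((a : ℕ) < n - 2 ∧ n - 2 ≤ (b : ℕ)))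

open Function
open scoped Fin.NatCast Fin.IntCast Fin.CommRing

namespace C5Aux


variable {V : Type*} (G : SimpleGraph V)

def cycRel (c : Fin 5 → V) (x y : V) : Prop :=
  ∃ i : Fin 5, (x = c i ∧ y = c (i+1)) ∨ (y = c i ∧ x = c (i+1))

def cycSub (c : Fin 5 → V) : G.Subgraph where
  verts := Set.range c
  Adj x y := G.Adj x y ∧ cycRel c x y
  adj_sub h := h.1
  edge_vert := by rintro x y ⟨_, i, ⟨rfl, rfl⟩|⟨rfl, rfl⟩⟩ <;> exact ⟨_, rfl⟩
  symm := ⟨by rintro x y ⟨h, i, hi⟩; exact ⟨h.symm, i, hi.symm⟩⟩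

def cycMap (c : Fin 5 → V) : Prop :=
  Injective c ∧ ∀ i, G.Adj (c i) (c (i+1))

@[simp] lemma cycSub_verts (c : Fin 5 → V) : (cycSub G c).verts = Set.range c := rfl

@[simp] lemma cycSub_adj (c : Fin 5 → V) (x y : V) :
    (cycSub G c).Adj x y ↔ G.Adj x y ∧ cycRel c x y := Iff.rfl

lemma cycleGraph5_adj : ∀ a b : Fin 5, (cycleGraph 5).Adj a b ↔ (b = a + 1 ∨ a = b + 1) := by
  decide

noncomputable def cycIso (c : Fin 5 → V) (h : cycMap G c) :
    cycleGraph 5 ≃g (cycSub G c).coe where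
  toEquiv := Equiv.ofInjective c h.1
  map_rel_iff' := by
    intro a b
    simp only [Equiv.ofInjective_apply, Subgraph.coe_adj, cycSub_adj, cycleGraph5_adj]
    constructor
    · rintro ⟨-, i, ⟨h1, h2⟩ | ⟨h1, h2⟩⟩
      · exact Or.inl (by rw [h.1 h1, h.1 h2])
      · exact Or.inr (by rw [h.1 h1, h.1 h2])
    · rintro (rfl | rfl)
      · exact ⟨h.2 a, a, Or.inl ⟨rfl, rfl⟩⟩
      · exact ⟨(h.2 b).symm, b, Or.inr ⟨rfl, rfl⟩⟩

lemma nonempty_iso_iff (H : G.Subgraph) :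
    Nonempty (H.coe ≃g cycleGraph 5) ↔ ∃ c, cycMap G c ∧ H = cycSub G c := by
  constructor
  · rintro ⟨φ⟩
    refine ⟨fun i => (φ.symm i : V), ⟨?_, ?_⟩, ?_⟩
    · intro i j hij
      exact φ.symm.injective (Subtype.ext hij)
    · intro i
      have : H.coe.Adj (φ.symm i) (φ.symm (i+1)) := by
        rw [φ.symm.map_adj_iff]
        exact (cycleGraph5_adj i (i+1)).2 (Or.inl rfl)
      exact H.adj_sub this
    · have key : ∀ x (hx : x ∈ H.verts), x = ((φ.symm (φ ⟨x, hx⟩) : H.verts) : V) := by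
        intro x hx
        have : φ.symm (φ ⟨x, hx⟩) = ⟨x, hx⟩ := φ.toEquiv.symm_apply_apply _
        rw [this]
      ext x y
      · simp only [cycSub_verts, Set.mem_range]
        constructor
        · intro hx; exact ⟨φ ⟨x, hx⟩, (key x hx).symm⟩
        · rintro ⟨i, rfl⟩; exact (φ.symm i).2
      · simp only [cycSub_adj]
        constructor
        · intro hadj
          have hx := H.edge_vert hadj
          have hy := H.edge_vert hadj.symm
          refine ⟨H.adj_sub hadj, ?_⟩
          have hc : (cycleGraph 5).Adj (φ ⟨x, hx⟩) (φ ⟨y, hy⟩) := φ.map_adj_iff.2 hadj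
          rcases (cycleGraph5_adj _ _).1 hc with h1 | h1
          · refine ⟨φ ⟨x, hx⟩, Or.inl ⟨key x hx, ?_⟩⟩
            show y = ((φ.symm (φ ⟨x, hx⟩ + 1) : H.verts) : V)
            rw [← h1]; exact key y hy
          · refine ⟨φ ⟨y, hy⟩, Or.inr ⟨key y hy, ?_⟩⟩
            show x = ((φ.symm (φ ⟨y, hy⟩ + 1) : H.verts) : V)
            rw [← h1]; exact key x hx
        · have base : ∀ i : Fin 5, H.Adj ((φ.symm i : H.verts) : V) ((φ.symm (i+1) : H.verts) : V) := by
            intro i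
            have : H.coe.Adj (φ.symm i) (φ.symm (i+1)) := by
              rw [φ.symm.map_adj_iff]
              exact (cycleGraph5_adj i (i+1)).2 (Or.inl rfl)
            exact this
          rintro ⟨-, i, ⟨rfl, rfl⟩ | ⟨rfl, rfl⟩⟩
          · exact base i
          · exact (base i).symm
  · rintro ⟨c, hc, rfl⟩
    exact ⟨(cycIso G c hc).symm⟩

@[simp] def dihProp (σ : Fin 5 → Fin 5) : Prop := ∀ i, σ (i+1) = σ i + 1 ∨ σ i = σ (i+1) + 1

lemma cycSub_comp_le (c : Fin 5 → V) (σ : Fin 5 → Fin 5) (hσ : dihProp σ) :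
    cycSub G (c ∘ σ) ≤ cycSub G c := by
  constructor
  · rintro x ⟨i, rfl⟩; exact ⟨σ i, rfl⟩
  · rintro x y ⟨hG, i, h⟩
    refine ⟨hG, ?_⟩
    rcases hσ i with h1 | h1
    · refine ⟨σ i, ?_⟩
      simpa only [Function.comp_apply, h1] using h
    · refine ⟨σ (i+1), ?_⟩
      rcases h with ⟨ha, hb⟩ | ⟨ha, hb⟩
      · exact Or.inr ⟨hb, by rw [← h1]; exact ha⟩
      · exact Or.inl ⟨hb, by rw [← h1]; exact ha⟩

lemma cycSub_comp_eq (c : Fin 5 → V) (σ : Equiv.Perm (Fin 5)) (hσ : dihProp σ)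
    (hσ' : dihProp σ.symm) : cycSub G (c ∘ σ) = cycSub G c := by
  refine le_antisymm (cycSub_comp_le G c σ hσ) ?_
  have h2 := cycSub_comp_le G (c ∘ σ) σ.symm hσ'
  have : (c ∘ σ) ∘ σ.symm = c := by
    funext i; simp
  rwa [this] at h2

lemma cycSub_rot (c : Fin 5 → V) (k : Fin 5) :
    cycSub G (fun i => c (i + k)) = cycSub G c := by
  refine cycSub_comp_eq G c (Equiv.addRight k) (fun i => Or.inl ?_) (fun i => Or.inl ?_)
  · show i + 1 + k = i + k + 1; ring

  · simp only [Equiv.addRight_symm, Equiv.coe_addRight]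
    ring

lemma cycSub_neg (c : Fin 5 → V) :
    cycSub G (fun i => c (-i)) = cycSub G c := by
  have := cycSub_comp_eq G c (Equiv.neg (Fin 5)) (fun i => Or.inr ?_) (fun i => Or.inr ?_)
  exact this
  · show -i = -(i+1) + 1; ring
  · show -i = -(i+1) + 1; ring

lemma cycMap_rot (c : Fin 5 → V) (hc : cycMap G c) (k : Fin 5) :
    cycMap G (fun j => c (j + k)) := by
  refine ⟨hc.1.comp (fun a b h => by simpa using h), fun j => ?_⟩
  have := hc.2 (j + k)
  simpa [add_right_comm] using this

lemma cycMap_neg (c : Fin 5 → V) (hc : cycMap G c) :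
    cycMap G (fun j => c (-j)) := by
  refine ⟨hc.1.comp (fun a b h => by simpa using h), fun j => ?_⟩
  have := (hc.2 (-j - 1)).symm
  have e1 : -j - 1 + 1 = -j := by ring
  have e2 : -(j + 1) = -j - 1 := by ring
  rw [e1] at this
  simpa [e2] using this

lemma cycSub_reflect (c : Fin 5 → V) (k : Fin 5) :
    cycSub G (fun j => c (k - j)) = cycSub G c := by
  have h2 := cycSub_rot G (fun j => c (-j)) (-k)
  have he : (fun j => (fun j' => c (-j')) (j + -k)) = (fun j => c (k - j)) := by
    funext j; show c (-(j + -k)) = c (k - j); congr 1; ring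
  rw [he] at h2
  rw [h2, cycSub_neg]

lemma mem_range_vec (a0 a1 a2 a3 a4 x : V) :
    x ∈ Set.range ![a0,a1,a2,a3,a4] ↔ (x = a0 ∨ x = a1 ∨ x = a2 ∨ x = a3 ∨ x = a4) := by
  constructor
  · rintro ⟨i, rfl⟩
    fin_cases i <;> simp
  · rintro (rfl|rfl|rfl|rfl|rfl)
    exacts [⟨0, rfl⟩, ⟨1, rfl⟩, ⟨2, rfl⟩, ⟨3, rfl⟩, ⟨4, rfl⟩]

lemma cycRel_explicit (a0 a1 a2 a3 a4 x y : V) :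
    cycRel ![a0,a1,a2,a3,a4] x y ↔
      (x = a0 ∧ y = a1 ∨ y = a0 ∧ x = a1) ∨ (x = a1 ∧ y = a2 ∨ y = a1 ∧ x = a2) ∨
      (x = a2 ∧ y = a3 ∨ y = a2 ∧ x = a3) ∨ (x = a3 ∧ y = a4 ∨ y = a3 ∧ x = a4) ∨
      (x = a4 ∧ y = a0 ∨ y = a4 ∧ x = a0) := by
  unfold cycRel
  constructor
  · rintro ⟨i, h⟩
    fin_cases i <;> simp_all
  · intro h
    rcases h with h|h|h|h|h
    exacts [⟨0, by simpa using h⟩, ⟨1, by simpa using h⟩, ⟨2, by simpa using h⟩,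
      ⟨3, by simpa using h⟩, ⟨4, by simpa using h⟩]

lemma cycSub_adj_consec (c : Fin 5 → V) (hc : cycMap G c) (j : Fin 5) :
    (cycSub G c).Adj (c j) (c (j+1)) := ⟨hc.2 j, j, Or.inl ⟨rfl, rfl⟩⟩

lemma cycMap_mk (a0 a1 a2 a3 a4 : V)
    (h01 : G.Adj a0 a1) (h12 : G.Adj a1 a2) (h23 : G.Adj a2 a3) (h34 : G.Adj a3 a4)
    (h40 : G.Adj a4 a0)
    (d02 : a0 ≠ a2) (d03 : a0 ≠ a3) (d13 : a1 ≠ a3) (d14 : a1 ≠ a4) (d24 : a2 ≠ a4) :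
    cycMap G ![a0,a1,a2,a3,a4] := by
  have d01 : a0 ≠ a1 := h01.ne
  have d12 : a1 ≠ a2 := h12.ne
  have d23 : a2 ≠ a3 := h23.ne
  have d34 : a3 ≠ a4 := h34.ne
  have d04 : a0 ≠ a4 := h40.ne'
  constructor
  · intro a b h
    fin_cases a <;> fin_cases b <;> simp_all
  · intro j
    fin_cases j
    · exact h01
    · exact h12
    · exact h23
    · exact h34
    · exact h40

section Dn

lemma nmod (a m : ℕ) (ha : a < m) : (a+1) % m = if a + 1 = m then 0 else a + 1 := by
  split
  · simp [*]
  · exact Nat.mod_eq_of_lt (by omega)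

variable (N : ℕ)

def emb : Fin (N+4) → Fin (N+6) := Fin.castLE (by omega)
def sp : Bool → Fin (N+6) := fun w => if w then ⟨N+4, by omega⟩ else ⟨N+5, by omega⟩

@[simp] lemma emb_val (i : Fin (N+4)) : (emb N i).val = i.val := rfl
lemma sp_val (w : Bool) : (sp N w).val = if w then N+4 else N+5 := by cases w <;> rfl

lemma emb_inj : Injective (emb N) := Fin.castLE_injective _
@[simp] lemma emb_eq_iff (i j : Fin (N+4)) : emb N i = emb N j ↔ i = j := (emb_inj N).eq_iff
lemma emb_ne_sp (i : Fin (N+4)) (w : Bool) : emb N i ≠ sp N w := by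
  intro h
  have h2 := congrArg Fin.val h
  have := i.isLt
  cases w <;> simp [sp_val] at h2 <;> omega
@[simp] lemma sp_eq_iff (w w' : Bool) : sp N w = sp N w' ↔ w = w' := by
  cases w <;> cases w' <;> simp [sp, Fin.ext_iff]

lemma fin_add_one_val (i : Fin (N+4)) : (i + 1).val = (i.val + 1) % (N+4) := by
  rw [Fin.add_def, Fin.val_one']
  rw [Nat.one_mod_eq_one.mpr (by omega)]

lemma eq_add_one_iff (i j : Fin (N+4)) :
    j = i + 1 ↔ (j.val = i.val + 1 ∨ (i.val = N+3 ∧ j.val = 0)) := by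
  rw [Fin.ext_iff, fin_add_one_val, nmod _ _ i.isLt]
  have := i.isLt; have := j.isLt
  split <;> omega

lemma hm2 : N + 6 - 2 = N + 4 := rfl

lemma adj_emb_emb (i j : Fin (N+4)) :
    (Dgraph (N+6)).Adj (emb N i) (emb N j) ↔ j = i + 1 ∨ i = j + 1 := by
  have hi := i.isLt; have hj := j.isLt
  simp only [Dgraph, fromRel_adj, hm2, emb_val, ne_eq]
  rw [eq_add_one_iff, eq_add_one_iff, nmod _ _ hi, nmod _ _ hj]
  have hne : (emb N i = emb N j) ↔ (i.val = j.val) := by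
    rw [emb_eq_iff, Fin.ext_iff]
  rw [hne]
  constructor
  · rintro ⟨hne', h⟩
    split at h <;> split at h <;> omega
  · intro h
    constructor
    · omega
    · split <;> split <;> omega

lemma adj_emb_sp (i : Fin (N+4)) (w : Bool) :
    (Dgraph (N+6)).Adj (emb N i) (sp N w) := by
  have hi := i.isLt
  simp only [Dgraph, fromRel_adj, hm2, emb_val, ne_eq]
  refine ⟨emb_ne_sp N i w, Or.inl (Or.inr ⟨by omega, ?_⟩)⟩
  cases w <;> simp [sp_val] <;> omega

lemma adj_sp_sp (w w' : Bool) : ¬ (Dgraph (N+6)).Adj (sp N w) (sp N w') := by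
  simp only [Dgraph, fromRel_adj, hm2, ne_eq]
  rintro ⟨hne, h⟩
  rcases h with (⟨h1, -⟩ | ⟨h1, -⟩) | (⟨h1, -⟩ | ⟨h1, -⟩) <;>
    cases w <;> cases w' <;> simp [sp_val] at h1 <;> omega

lemma vertex_cases (x : Fin (N+6)) : (∃ i, x = emb N i) ∨ x = sp N true ∨ x = sp N false := by
  have := x.isLt
  rcases lt_trichotomy x.val (N+4) with h | h | h
  · exact Or.inl ⟨⟨x.val, h⟩, by simp [Fin.ext_iff]⟩
  · exact Or.inr (Or.inl (by simp [sp, Fin.ext_iff, h]))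
  · exact Or.inr (Or.inr (by simp [sp, Fin.ext_iff]; omega))

lemma offs_ne (i : Fin (N+4)) (k l : ℕ) (hk : k < N+4) (hl : l < N+4) (h : k ≠ l) :
    i + (k : Fin (N+4)) ≠ i + (l : Fin (N+4)) := by
  intro heq
  have h2 : (k : Fin (N+4)) = (l : Fin (N+4)) := add_left_cancel heq
  rw [Fin.ext_iff, Fin.val_cast_of_lt hk, Fin.val_cast_of_lt hl] at h2
  exact h h2

lemma n0 : (0 : Fin (N+4)) = ((0:ℕ) : Fin (N+4)) := by norm_cast
lemma n1 : (1 : Fin (N+4)) = ((1:ℕ) : Fin (N+4)) := by norm_cast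
lemma n2 : (2 : Fin (N+4)) = ((2:ℕ) : Fin (N+4)) := by norm_cast
lemma n3 : (3 : Fin (N+4)) = ((3:ℕ) : Fin (N+4)) := by norm_cast

lemma off01 (i : Fin (N+4)) : i ≠ i + 1 := by
  conv_lhs => rw [← add_zero i]
  rw [n0, n1]; exact offs_ne N i 0 1 (by omega) (by omega) (by omega)
lemma off02 (i : Fin (N+4)) : i ≠ i + 2 := by
  conv_lhs => rw [← add_zero i]
  rw [n0, n2]; exact offs_ne N i 0 2 (by omega) (by omega) (by omega)
lemma off03 (i : Fin (N+4)) : i ≠ i + 3 := by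
  conv_lhs => rw [← add_zero i]
  rw [n0, n3]; exact offs_ne N i 0 3 (by omega) (by omega) (by omega)
lemma off12 (i : Fin (N+4)) : i + 1 ≠ i + 2 := by
  rw [n1, n2]; exact offs_ne N i 1 2 (by omega) (by omega) (by omega)
lemma off13 (i : Fin (N+4)) : i + 1 ≠ i + 3 := by
  rw [n1, n3]; exact offs_ne N i 1 3 (by omega) (by omega) (by omega)
lemma off23 (i : Fin (N+4)) : i + 2 ≠ i + 3 := by
  rw [n2, n3]; exact offs_ne N i 2 3 (by omega) (by omega) (by omega)

def cA (w : Bool) (i : Fin (N+4)) : Fin 5 → Fin (N+6) :=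
  ![sp N w, emb N i, emb N (i+1), emb N (i+2), emb N (i+3)]

def cB (w : Bool) (b a : Fin (N+4)) : Fin 5 → Fin (N+6) :=
  ![sp N w, emb N a, sp N (!w), emb N b, emb N (b+1)]

def cC : Fin 5 → Fin (N+6) := fun j => emb N ((j.val : ℕ) : Fin (N+4))

lemma cycMap_cA (w : Bool) (i : Fin (N+4)) : cycMap (Dgraph (N+6)) (cA N w i) := by
  refine cycMap_mk _ _ _ _ _ _ (adj_emb_sp N i w).symm ?_ ?_ ?_ (adj_emb_sp N (i+3) w)
    (emb_ne_sp N (i+1) w).symm (emb_ne_sp N (i+2) w).symm ?_ ?_ ?_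
  · exact (adj_emb_emb N i (i+1)).2 (Or.inl rfl)
  · exact (adj_emb_emb N (i+1) (i+2)).2 (Or.inl (by ring))
  · exact (adj_emb_emb N (i+2) (i+3)).2 (Or.inl (by ring))
  · rw [Ne, emb_eq_iff]; exact off02 N i
  · rw [Ne, emb_eq_iff]; exact off03 N i
  · rw [Ne, emb_eq_iff]; exact off13 N i

lemma cycMap_cB (w : Bool) (b a : Fin (N+4)) (ha : a ≠ b) (ha' : a ≠ b + 1) :
    cycMap (Dgraph (N+6)) (cB N w b a) := by
  refine cycMap_mk _ _ _ _ _ _ (adj_emb_sp N a w).symm (adj_emb_sp N a (!w))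
    (adj_emb_sp N b (!w)).symm ((adj_emb_emb N b (b+1)).2 (Or.inl rfl))
    (adj_emb_sp N (b+1) w) ?_ ?_ ?_ ?_ ?_
  · rw [Ne, sp_eq_iff]; cases w <;> simp
  · exact (emb_ne_sp N b w).symm
  · rw [Ne, emb_eq_iff]; exact ha
  · rw [Ne, emb_eq_iff]; exact ha'
  · exact (emb_ne_sp N (b+1) (!w)).symm

lemma cycMap_cC (h : N = 1) : cycMap (Dgraph (N+6)) (cC N) := by
  subst h
  constructor
  · decide
  · intro j
    have : ∀ a b : Fin 5, (Dgraph 7).Adj (cC 1 a) (cC 1 b) ↔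
        ((b.val : Fin 5) = (a.val : Fin 5) + 1 ∨ (a.val : Fin 5) = (b.val : Fin 5) + 1) :=
      fun a b => adj_emb_emb 1 _ _
    rw [this]
    revert j; decide

lemma adj_to_emb (w : Bool) (x : Fin (N+6)) (h : (Dgraph (N+6)).Adj (sp N w) x) :
    ∃ i, x = emb N i := by
  rcases vertex_cases N x with h1 | h1 | h1
  · exact h1
  · exact absurd (h1 ▸ h) (adj_sp_sp N w true)
  · exact absurd (h1 ▸ h) (adj_sp_sp N w false)

lemma classify_noSp_aux (c : Fin 5 → Fin (N+6)) (hc : cycMap (Dgraph (N+6)) c)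
    (x : Fin 5 → Fin (N+4)) (hx : ∀ j, c j = emb N (x j))
    (hup : ∀ j, x (j+1) = x j + 1) :
    N = 1 ∧ cycSub (Dgraph (N+6)) c = cycSub (Dgraph (N+6)) (cC N) := by
  have e1 := hup 0
  have e2 := hup 1
  have e3 := hup 2
  have e4 := hup 3
  have e5 := hup 4
  rw [show (0:Fin 5)+1 = 1 by decide] at e1
  rw [show (1:Fin 5)+1 = 2 by decide] at e2
  rw [show (2:Fin 5)+1 = 3 by decide] at e3
  rw [show (3:Fin 5)+1 = 4 by decide] at e4
  rw [show (4:Fin 5)+1 = 0 by decide] at e5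
  have hcyc : x 0 + (1+1+1+1+1) = x 0 := by
    have : x 0 = x 0 + (1+1+1+1+1) := by
      calc x 0 = x 4 + 1 := e5
        _ = x 3 + 1 + 1 := by rw [e4]
        _ = x 2 + 1 + 1 + 1 := by rw [e3]
        _ = x 1 + 1 + 1 + 1 + 1 := by rw [e2]
        _ = x 0 + (1+1+1+1+1) := by rw [e1]; ring
    exact this.symm
  have h5 : (1+1+1+1+1 : Fin (N+4)) = 0 := by rwa [add_eq_left] at hcyc
  have h5' : ((5:ℕ) : Fin (N+4)) = 0 := by
    rw [show ((5:ℕ):Fin (N+4)) = 1+1+1+1+1 by push_cast; ring]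
    exact h5
  have hval : 5 % (N+4) = 0 := by
    have h6 := congrArg Fin.val h5'
    rwa [Fin.val_natCast, Fin.val_zero] at h6
  have hdvd : (N+4) ∣ 5 := Nat.dvd_of_mod_eq_zero hval
  have hle : N+4 ≤ 5 := Nat.le_of_dvd (by norm_num) hdvd
  have hN1 : N = 1 := by
    rcases (by omega : N = 0 ∨ N = 1) with rfl | rfl
    · norm_num at hdvd
    · rfl
  subst hN1
  refine ⟨rfl, ?_⟩
  have hcast : ∀ j : Fin 5, cC 1 j = emb 1 j := by
    intro j; unfold cC; congr 1; exact Fin.cast_val_eq_self _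
  have key : (fun j : Fin 5 => cC 1 (j + x 0)) = c := by
    funext j
    rw [hcast]
    fin_cases j
    · show emb 1 (0 + x 0) = c 0
      rw [hx 0, emb_eq_iff]; exact zero_add _
    · show emb 1 (1 + x 0) = c 1
      rw [hx 1, emb_eq_iff, e1]; ring
    · show emb 1 (2 + x 0) = c 2
      rw [hx 2, emb_eq_iff, e2, e1]; ring
    · show emb 1 (3 + x 0) = c 3
      rw [hx 3, emb_eq_iff, e3, e2, e1]; ring
    · show emb 1 (4 + x 0) = c 4
      rw [hx 4, emb_eq_iff, e4, e3, e2, e1]; ring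
  rw [← key, cycSub_rot]

lemma classify_noSp (c : Fin 5 → Fin (N+6)) (hc : cycMap (Dgraph (N+6)) c)
    (h : ∀ j, ∃ i, c j = emb N i) :
    N = 1 ∧ cycSub (Dgraph (N+6)) c = cycSub (Dgraph (N+6)) (cC N) := by
  choose x hx using h
  have fne1 : ∀ t : Fin 5, t + 1 + 1 ≠ t := by decide
  have fne2 : ∀ t : Fin 5, t ≠ t + 1 + 1 := by decide
  have steps : ∀ j, x (j+1) = x j + 1 ∨ x j = x (j+1) + 1 := by
    intro j
    have h2 := hc.2 j
    rw [hx j, hx (j+1)] at h2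
    exact (adj_emb_emb N _ _).1 h2
  by_cases hup : ∀ j, x (j+1) = x j + 1
  · exact classify_noSp_aux N c hc x hx hup
  · have keydown : ∀ j, x j = x (j+1) + 1 → x (j+1) = x (j+1+1) + 1 := by
      intro j hj
      rcases steps (j+1) with h' | h'
      · exfalso
        have hxx : x (j+1+1) = x j := by rw [h', ← hj]
        have hceq : c (j+1+1) = c j := by rw [hx, hx, hxx]
        exact fne1 j (hc.1 hceq)
      · exact h'
    have hdown0 : ∃ j0, x j0 = x (j0+1) + 1 := by
      push_neg at hup
      obtain ⟨j0, h0⟩ := hup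
      exact ⟨j0, (steps j0).resolve_left h0⟩
    obtain ⟨j0, d0⟩ := hdown0
    have d1 := keydown _ d0
    have d2 := keydown _ d1
    have d3 := keydown _ d2
    have d4 := keydown _ d3
    have dAll : ∀ j, x j = x (j+1) + 1 := by
      intro j
      obtain ⟨k, hk⟩ : ∃ k : Fin 5, j = j0 + k := ⟨j - j0, by ring⟩
      subst hk
      fin_cases k
      · simpa using d0
      · simpa [add_assoc] using d1
      · have e : j0 + 1 + 1 = j0 + 2 := by ring
        rw [e] at d2; simpa using d2
      · have e : j0 + 1 + 1 + 1 = j0 + 3 := by ring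
        rw [e] at d3; simpa using d3
      · have e : j0 + 1 + 1 + 1 + 1 = j0 + 4 := by ring
        rw [e] at d4; simpa using d4
    have hc' := cycMap_neg _ c hc
    have hx' : ∀ j : Fin 5, (fun j => c (-j)) j = emb N (x (-j)) := fun j => hx (-j)
    have hup' : ∀ j : Fin 5, x (-(j+1)) = x (-j) + 1 := by
      intro j
      have hd := dAll (-(j+1))
      rw [show -(j+1)+1 = -j by ring] at hd
      exact hd
    obtain ⟨h1, h2⟩ := classify_noSp_aux N (fun j => c (-j)) hc' (fun j => x (-j)) hx' hup'
    exact ⟨h1, by rw [← cycSub_neg _ c]; exact h2⟩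

lemma classifyA (c : Fin 5 → Fin (N+6)) (hc : cycMap (Dgraph (N+6)) c) (w : Bool)
    (h0 : c 0 = sp N w) (x1 x2 x3 x4 : Fin (N+4))
    (h1 : c 1 = emb N x1) (h2 : c 2 = emb N x2) (h3 : c 3 = emb N x3)
    (h4 : c 4 = emb N x4) :
    ∃ w' i, cycSub (Dgraph (N+6)) c = cycSub (Dgraph (N+6)) (cA N w' i) := by
  have a12 := hc.2 1
  have a23 := hc.2 2
  have a34 := hc.2 3
  rw [show (1:Fin 5)+1 = 2 by decide] at a12
  rw [show (2:Fin 5)+1 = 3 by decide] at a23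
  rw [show (3:Fin 5)+1 = 4 by decide] at a34
  rw [h1, h2] at a12
  rw [h2, h3] at a23
  rw [h3, h4] at a34
  have s1 := (adj_emb_emb N _ _).1 a12
  have s2 := (adj_emb_emb N _ _).1 a23
  have s3 := (adj_emb_emb N _ _).1 a34
  have i13 : x1 ≠ x3 := by
    intro h
    have : c 1 = c 3 := by rw [h1, h3, h]
    exact absurd (hc.1 this) (by decide)
  have i24 : x2 ≠ x4 := by
    intro h
    have : c 2 = c 4 := by rw [h2, h4, h]
    exact absurd (hc.1 this) (by decide)
  rcases s1 with u1 | d1 <;> rcases s2 with u2 | d2 <;> rcases s3 with u3 | d3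
  · -- all up
    refine ⟨w, x1, ?_⟩
    have key : cA N w x1 = c := by
      funext j
      fin_cases j
      · exact h0.symm
      · exact h1.symm
      · show emb N (x1 + 1) = c 2
        rw [h2, emb_eq_iff, u1]
      · show emb N (x1 + 2) = c 3
        rw [h3, emb_eq_iff, u2, u1]; ring
      · show emb N (x1 + 3) = c 4
        rw [h4, emb_eq_iff, u3, u2, u1]; ring
    rw [← key]
  · exact absurd (add_right_cancel ((u2.symm).trans d3)) i24
  · exact absurd (add_right_cancel ((u1.symm).trans d2)) i13
  · exact absurd (add_right_cancel ((u1.symm).trans d2)) i13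
  · exact absurd (d1.trans u2.symm) i13
  · exact absurd (d1.trans u2.symm) i13
  · exact absurd (d2.trans u3.symm) i24
  · -- all down
    refine ⟨w, x4, ?_⟩
    have key : (fun j => cA N w x4 (-j)) = c := by
      funext j
      fin_cases j
      · exact h0.symm
      · show emb N (x4 + 3) = c 1
        rw [h1, emb_eq_iff, d1, d2, d3]; ring
      · show emb N (x4 + 2) = c 2
        rw [h2, emb_eq_iff, d2, d3]; ring
      · show emb N (x4 + 1) = c 3
        rw [h3, emb_eq_iff, d3]
      · exact h4.symm
    rw [← key, cycSub_neg]

lemma classifyB (c : Fin 5 → Fin (N+6)) (hc : cycMap (Dgraph (N+6)) c) (w w' : Bool)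
    (h0 : c 0 = sp N w) (h2 : c 2 = sp N w') :
    ∃ w₀ b a, a ≠ b ∧ a ≠ b + 1 ∧
      cycSub (Dgraph (N+6)) c = cycSub (Dgraph (N+6)) (cB N w₀ b a) := by
  obtain ⟨a, h1⟩ : ∃ i, c 1 = emb N i := by
    refine adj_to_emb N w (c 1) ?_
    have := hc.2 0
    rw [show (0:Fin 5)+1 = 1 by decide, h0] at this
    exact this
  obtain ⟨x3, h3⟩ : ∃ i, c 3 = emb N i := by
    refine adj_to_emb N w' (c 3) ?_
    have := hc.2 2
    rw [show (2:Fin 5)+1 = 3 by decide, h2] at this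
    exact this
  obtain ⟨x4, h4⟩ : ∃ i, c 4 = emb N i := by
    refine adj_to_emb N w (c 4) ?_
    have := (hc.2 4).symm
    rw [show (4:Fin 5)+1 = 0 by decide, h0] at this
    exact this
  have hw' : w' = !w := by
    have hne : w ≠ w' := by
      intro e
      rw [← e] at h2
      exact absurd (hc.1 (h0.trans h2.symm)) (by decide)
    cases w <;> cases w' <;> simp_all
  have a34 := hc.2 3
  rw [show (3:Fin 5)+1 = 4 by decide, h3, h4] at a34
  have s := (adj_emb_emb N _ _).1 a34
  have i13 : a ≠ x3 := by
    intro h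
    have : c 1 = c 3 := by rw [h1, h3, h]
    exact absurd (hc.1 this) (by decide)
  have i14 : a ≠ x4 := by
    intro h
    have : c 1 = c 4 := by rw [h1, h4, h]
    exact absurd (hc.1 this) (by decide)
  rcases s with u | d
  · refine ⟨w, x3, a, i13, ?_, ?_⟩
    · rw [← u]; exact i14
    · have key : cB N w x3 a = c := by
        funext j
        fin_cases j
        · exact h0.symm
        · exact h1.symm
        · show sp N (!w) = c 2
          rw [h2, hw']
        · exact h3.symm
        · show emb N (x3 + 1) = c 4
          rw [h4, emb_eq_iff, u]
      rw [← key]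
  · refine ⟨!w, x4, a, i14, ?_, ?_⟩
    · rw [← d]; exact i13
    · have key : (fun j => cB N (!w) x4 a (2 - j)) = c := by
        funext j
        fin_cases j
        · show sp N (!(!w)) = c 0
          rw [h0, Bool.not_not]
        · exact h1.symm
        · show sp N (!w) = c 2
          rw [h2, hw']
        · show emb N (x4 + 1) = c 3
          rw [h3, emb_eq_iff, d]
        · exact h4.symm
      rw [← key, cycSub_reflect]

lemma classify (c : Fin 5 → Fin (N+6)) (hc : cycMap (Dgraph (N+6)) c) :
    (∃ w i, cycSub (Dgraph (N+6)) c = cycSub (Dgraph (N+6)) (cA N w i)) ∨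
    (∃ w b a, a ≠ b ∧ a ≠ b + 1 ∧
      cycSub (Dgraph (N+6)) c = cycSub (Dgraph (N+6)) (cB N w b a)) ∨
    (N = 1 ∧ cycSub (Dgraph (N+6)) c = cycSub (Dgraph (N+6)) (cC N)) := by
  by_cases hall : ∀ j, ∃ i, c j = emb N i
  · exact Or.inr (Or.inr (classify_noSp N c hc hall))
  · push_neg at hall
    obtain ⟨j0, hj0⟩ := hall
    obtain ⟨w, hw⟩ : ∃ w, c j0 = sp N w := by
      rcases vertex_cases N (c j0) with h | h | h
      · obtain ⟨i, hi⟩ := h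
        exact absurd hi (hj0 i)
      · exact ⟨true, h⟩
      · exact ⟨false, h⟩
    have hmc1 : cycMap (Dgraph (N+6)) (fun j => c (j + j0)) := cycMap_rot _ c hc j0
    have hsub1 : cycSub (Dgraph (N+6)) (fun j => c (j + j0)) = cycSub (Dgraph (N+6)) c :=
      cycSub_rot _ c j0
    set c1 : Fin 5 → Fin (N+6) := fun j => c (j + j0) with hc1def
    have h0 : c1 0 = sp N w := by
      show c (0 + j0) = sp N w
      rw [zero_add]; exact hw
    rcases vertex_cases N (c1 2) with ⟨x2, hx2⟩ | hs2 | hs2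
    · rcases vertex_cases N (c1 3) with ⟨x3, hx3⟩ | hs3 | hs3
      · -- type A
        obtain ⟨x1, hx1⟩ : ∃ i, c1 1 = emb N i := by
          refine adj_to_emb N w (c1 1) ?_
          have := hmc1.2 0
          rw [show (0:Fin 5)+1 = 1 by decide, h0] at this
          exact this
        obtain ⟨x4, hx4⟩ : ∃ i, c1 4 = emb N i := by
          refine adj_to_emb N w (c1 4) ?_
          have := (hmc1.2 4).symm
          rw [show (4:Fin 5)+1 = 0 by decide, h0] at this
          exact this
        obtain ⟨w', i, hEq⟩ := classifyA N c1 hmc1 w h0 x1 x2 x3 x4 hx1 hx2 hx3 hx4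
        exact Or.inl ⟨w', i, by rw [← hsub1, hEq]⟩
      · -- c1 3 special (true): rotate by 3
        refine Or.inr (Or.inl ?_)
        have hmc2 : cycMap (Dgraph (N+6)) (fun j => c1 (j + 3)) := cycMap_rot _ c1 hmc1 3
        have hsub2 : cycSub (Dgraph (N+6)) (fun j => c1 (j + 3)) = cycSub (Dgraph (N+6)) c1 :=
          cycSub_rot _ c1 3
        have h0' : (fun j => c1 (j + 3)) 0 = sp N true := by
          show c1 (0 + 3) = _
          rw [zero_add]; exact hs3
        have h2' : (fun j => c1 (j + 3)) 2 = sp N w := by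
          show c1 (2 + 3) = _
          rw [show (2:Fin 5)+3 = 0 by decide]; exact h0
        obtain ⟨w₀, b, a, hab, hab', hEq⟩ := classifyB N _ hmc2 true w h0' h2'
        exact ⟨w₀, b, a, hab, hab', by rw [← hsub1, ← hsub2, hEq]⟩
      · -- c1 3 special (false): rotate by 3
        refine Or.inr (Or.inl ?_)
        have hmc2 : cycMap (Dgraph (N+6)) (fun j => c1 (j + 3)) := cycMap_rot _ c1 hmc1 3
        have hsub2 : cycSub (Dgraph (N+6)) (fun j => c1 (j + 3)) = cycSub (Dgraph (N+6)) c1 :=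
          cycSub_rot _ c1 3
        have h0' : (fun j => c1 (j + 3)) 0 = sp N false := by
          show c1 (0 + 3) = _
          rw [zero_add]; exact hs3
        have h2' : (fun j => c1 (j + 3)) 2 = sp N w := by
          show c1 (2 + 3) = _
          rw [show (2:Fin 5)+3 = 0 by decide]; exact h0
        obtain ⟨w₀, b, a, hab, hab', hEq⟩ := classifyB N _ hmc2 false w h0' h2'
        exact ⟨w₀, b, a, hab, hab', by rw [← hsub1, ← hsub2, hEq]⟩
    · refine Or.inr (Or.inl ?_)
      obtain ⟨w₀, b, a, hab, hab', hEq⟩ := classifyB N c1 hmc1 w true h0 hs2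
      exact ⟨w₀, b, a, hab, hab', by rw [← hsub1, hEq]⟩
    · refine Or.inr (Or.inl ?_)
      obtain ⟨w₀, b, a, hab, hab', hEq⟩ := classifyB N c1 hmc1 w false h0 hs2
      exact ⟨w₀, b, a, hab, hab', by rw [← hsub1, hEq]⟩

lemma off_absurd (i : Fin (N+4)) (k l : ℕ) (hk : k ≤ 4) (hl : l ≤ 4) (hkl : k ≠ l)
    (hd1 : k ≤ l + 3) (hd2 : l ≤ k + 3)
    (h : i + (k : Fin (N+4)) = i + (l : Fin (N+4))) : False := by
  have h2 : (k : Fin (N+4)) = (l : Fin (N+4)) := add_left_cancel h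
  have h3 := congrArg Fin.val h2
  rw [Fin.val_natCast, Fin.val_natCast] at h3
  rcases Nat.lt_or_ge k (N+4) with hck | hck <;> rcases Nat.lt_or_ge l (N+4) with hcl | hcl
  · rw [Nat.mod_eq_of_lt hck, Nat.mod_eq_of_lt hcl] at h3; omega
  · have hN : N = 0 := by omega
    subst hN
    rw [Nat.mod_eq_of_lt hck] at h3
    have hl4 : l = 4 := by omega
    subst hl4
    norm_num at h3; omega
  · have hN : N = 0 := by omega
    subst hN
    rw [Nat.mod_eq_of_lt hcl] at h3
    have hk4 : k = 4 := by omega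
    subst hk4
    norm_num at h3; omega
  · omega

lemma injA (w w' : Bool) (i i' : Fin (N+4))
    (h : cycSub (Dgraph (N+6)) (cA N w i) = cycSub (Dgraph (N+6)) (cA N w' i')) :
    w = w' ∧ i = i' := by
  have hw : w = w' := by
    have hmem : sp N w' ∈ (cycSub (Dgraph (N+6)) (cA N w i)).verts := by
      rw [h]; exact ⟨0, rfl⟩
    rcases (mem_range_vec (sp N w) (emb N i) (emb N (i+1)) (emb N (i+2)) (emb N (i+3))
        (sp N w')).1 hmem with h1|h1|h1|h1|h1
    · exact ((sp_eq_iff N w' w).1 h1).symm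
    all_goals exact absurd h1 (emb_ne_sp N _ _).symm
  subst hw
  refine ⟨rfl, ?_⟩
  have hA1 : (cycSub (Dgraph (N+6)) (cA N w i)).Adj (sp N w) (emb N i') := by
    rw [h]
    exact cycSub_adj_consec _ (cA N w i') (cycMap_cA N w i') 0
  have hA2 : (cycSub (Dgraph (N+6)) (cA N w i)).Adj (emb N i') (emb N (i'+1)) := by
    rw [h]
    exact cycSub_adj_consec _ (cA N w i') (cycMap_cA N w i') 1
  have key : i' = i ∨ i' = i + 3 := by
    rcases (cycRel_explicit (sp N w) (emb N i) (emb N (i+1)) (emb N (i+2)) (emb N (i+3))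
        _ _).1 hA1.2 with (⟨h1,h2⟩|⟨h1,h2⟩)|(⟨h1,h2⟩|⟨h1,h2⟩)|(⟨h1,h2⟩|⟨h1,h2⟩)|(⟨h1,h2⟩|⟨h1,h2⟩)|(⟨h1,h2⟩|⟨h1,h2⟩)
    · exact Or.inl ((emb_eq_iff N _ _).1 h2)
    · exact absurd h1 (emb_ne_sp N _ _)
    · exact absurd h1 (emb_ne_sp N _ _).symm
    · exact absurd h2 (emb_ne_sp N _ _).symm
    · exact absurd h1 (emb_ne_sp N _ _).symm
    · exact absurd h2 (emb_ne_sp N _ _).symm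
    · exact absurd h1 (emb_ne_sp N _ _).symm
    · exact absurd h2 (emb_ne_sp N _ _).symm
    · exact absurd h1 (emb_ne_sp N _ _).symm
    · exact Or.inr ((emb_eq_iff N _ _).1 h1)
  rcases key with hk | hk
  · exact hk.symm
  · exfalso
    subst hk
    rcases (cycRel_explicit (sp N w) (emb N i) (emb N (i+1)) (emb N (i+2)) (emb N (i+3))
        _ _).1 hA2.2 with (⟨h1,h2⟩|⟨h1,h2⟩)|(⟨h1,h2⟩|⟨h1,h2⟩)|(⟨h1,h2⟩|⟨h1,h2⟩)|(⟨h1,h2⟩|⟨h1,h2⟩)|(⟨h1,h2⟩|⟨h1,h2⟩)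
    · exact absurd h1 (emb_ne_sp N _ _)
    · exact absurd h1 (emb_ne_sp N _ _)
    · rw [emb_eq_iff] at h1
      exact off_absurd N i 3 0 (by omega) (by omega) (by omega) (by omega) (by omega)
        (by push_cast; linear_combination h1)
    · rw [emb_eq_iff] at h2
      exact off_absurd N i 3 1 (by omega) (by omega) (by omega) (by omega) (by omega)
        (by push_cast; linear_combination h2)
    · rw [emb_eq_iff] at h1
      exact off_absurd N i 3 1 (by omega) (by omega) (by omega) (by omega) (by omega)
        (by push_cast; linear_combination h1)
    · rw [emb_eq_iff] at h2
      exact off_absurd N i 3 2 (by omega) (by omega) (by omega) (by omega) (by omega)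
        (by push_cast; linear_combination h2)
    · rw [emb_eq_iff] at h1
      exact off_absurd N i 3 2 (by omega) (by omega) (by omega) (by omega) (by omega)
        (by push_cast; linear_combination h1)
    · rw [emb_eq_iff] at h1
      exact off_absurd N i 4 2 (by omega) (by omega) (by omega) (by omega) (by omega)
        (by push_cast; linear_combination h1)
    · exact absurd h2 (emb_ne_sp N _ _)
    · exact absurd h2 (emb_ne_sp N _ _)

lemma injB (w w' : Bool) (b a b' a' : Fin (N+4))
    (hab : a ≠ b) (hab1 : a ≠ b + 1) (hab' : a' ≠ b') (hab1' : a' ≠ b' + 1)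
    (h : cycSub (Dgraph (N+6)) (cB N w b a) = cycSub (Dgraph (N+6)) (cB N w' b' a')) :
    w = w' ∧ b = b' ∧ a = a' := by
  have hcm' := cycMap_cB N w' b' a' hab' hab1'
  have hB4 : (cycSub (Dgraph (N+6)) (cB N w b a)).Adj (emb N b') (emb N (b'+1)) := by
    rw [h]; exact cycSub_adj_consec _ _ hcm' 3
  have hb : b' = b := by
    rcases (cycRel_explicit (sp N w) (emb N a) (sp N (!w)) (emb N b) (emb N (b+1))
        _ _).1 hB4.2 with (⟨h1,h2⟩|⟨h1,h2⟩)|(⟨h1,h2⟩|⟨h1,h2⟩)|(⟨h1,h2⟩|⟨h1,h2⟩)|(⟨h1,h2⟩|⟨h1,h2⟩)|(⟨h1,h2⟩|⟨h1,h2⟩)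
    · exact absurd h1 (emb_ne_sp N _ _)
    · exact absurd h1 (emb_ne_sp N _ _)
    · exact absurd h2 (emb_ne_sp N _ _)
    · exact absurd h2 (emb_ne_sp N _ _)
    · exact absurd h1 (emb_ne_sp N _ _)
    · exact absurd h1 (emb_ne_sp N _ _)
    · exact (emb_eq_iff N _ _).1 h1
    · rw [emb_eq_iff] at h1 h2
      rw [h2] at h1
      exact absurd (off_absurd N b 2 0 (by omega) (by omega) (by omega) (by omega) (by omega)
        (by push_cast; linear_combination h1)) (by simp)
    · exact absurd h2 (emb_ne_sp N _ _)
    · exact absurd h2 (emb_ne_sp N _ _)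
  subst hb
  have hB5 : (cycSub (Dgraph (N+6)) (cB N w b' a)).Adj (emb N (b'+1)) (sp N w') := by
    rw [h]; exact cycSub_adj_consec _ _ hcm' 4
  have hw : w' = w := by
    rcases (cycRel_explicit (sp N w) (emb N a) (sp N (!w)) (emb N b') (emb N (b'+1))
        _ _).1 hB5.2 with (⟨h1,h2⟩|⟨h1,h2⟩)|(⟨h1,h2⟩|⟨h1,h2⟩)|(⟨h1,h2⟩|⟨h1,h2⟩)|(⟨h1,h2⟩|⟨h1,h2⟩)|(⟨h1,h2⟩|⟨h1,h2⟩)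
    · exact absurd h1 (emb_ne_sp N _ _)
    · exact absurd ((emb_eq_iff N _ _).1 h2).symm hab1
    · exact absurd ((emb_eq_iff N _ _).1 h1).symm hab1
    · exact absurd h1 (emb_ne_sp N _ _).symm
    · exact absurd h1 (emb_ne_sp N _ _)
    · rw [emb_eq_iff] at h2
      exact absurd (off_absurd N b' 1 0 (by omega) (by omega) (by omega) (by omega) (by omega)
        (by push_cast; linear_combination h2)) (by simp)
    · rw [emb_eq_iff] at h1
      exact absurd (off_absurd N b' 1 0 (by omega) (by omega) (by omega) (by omega) (by omega)
        (by push_cast; linear_combination h1)) (by simp)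
    · exact absurd h1 (emb_ne_sp N _ _).symm
    · exact (sp_eq_iff N w' w).1 h2
    · exact absurd h1 (emb_ne_sp N _ _).symm
  subst hw
  have hB1 : (cycSub (Dgraph (N+6)) (cB N w' b' a)).Adj (sp N w') (emb N a') := by
    rw [h]; exact cycSub_adj_consec _ _ hcm' 0
  refine ⟨rfl, rfl, ?_⟩
  rcases (cycRel_explicit (sp N w') (emb N a) (sp N (!w')) (emb N b') (emb N (b'+1))
      _ _).1 hB1.2 with (⟨h1,h2⟩|⟨h1,h2⟩)|(⟨h1,h2⟩|⟨h1,h2⟩)|(⟨h1,h2⟩|⟨h1,h2⟩)|(⟨h1,h2⟩|⟨h1,h2⟩)|(⟨h1,h2⟩|⟨h1,h2⟩)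
  · exact ((emb_eq_iff N _ _).1 h2).symm
  · exact absurd h1 (emb_ne_sp N _ _)
  · exact absurd h1 (emb_ne_sp N _ _).symm
  · exact absurd ((sp_eq_iff N w' (!w')).1 h2) (by cases w' <;> decide)
  · exact absurd ((sp_eq_iff N w' (!w')).1 h1) (by cases w' <;> decide)
  · exact absurd h1 (emb_ne_sp N _ _)
  · exact absurd h1 (emb_ne_sp N _ _).symm
  · exact absurd h2 (emb_ne_sp N _ _).symm
  · exact absurd h1 (emb_ne_sp N _ _).symm
  · exact absurd ((emb_eq_iff N _ _).1 h1) hab1'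

lemma A_ne_B (w : Bool) (i : Fin (N+4)) (w' : Bool) (b a : Fin (N+4)) :
    cycSub (Dgraph (N+6)) (cA N w i) ≠ cycSub (Dgraph (N+6)) (cB N w' b a) := by
  intro h
  have m1 : sp N w' ∈ (cycSub (Dgraph (N+6)) (cA N w i)).verts := by
    rw [h]; exact ⟨0, rfl⟩
  have m2 : sp N (!w') ∈ (cycSub (Dgraph (N+6)) (cA N w i)).verts := by
    rw [h]; exact ⟨2, rfl⟩
  have e1 : w' = w := by
    rcases (mem_range_vec (sp N w) (emb N i) (emb N (i+1)) (emb N (i+2)) (emb N (i+3))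
        (sp N w')).1 m1 with h1|h1|h1|h1|h1
    · exact (sp_eq_iff N w' w).1 h1
    all_goals exact absurd h1 (emb_ne_sp N _ _).symm
  have e2 : (!w') = w := by
    rcases (mem_range_vec (sp N w) (emb N i) (emb N (i+1)) (emb N (i+2)) (emb N (i+3))
        (sp N (!w'))).1 m2 with h1|h1|h1|h1|h1
    · exact (sp_eq_iff N (!w') w).1 h1
    all_goals exact absurd h1 (emb_ne_sp N _ _).symm
  rw [← e1] at e2
  cases w' <;> simp at e2

lemma A_ne_C (w : Bool) (i : Fin (N+4)) :
    cycSub (Dgraph (N+6)) (cA N w i) ≠ cycSub (Dgraph (N+6)) (cC N) := by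
  intro h
  have m1 : sp N w ∈ (cycSub (Dgraph (N+6)) (cC N)).verts := by
    rw [← h]; exact ⟨0, rfl⟩
  obtain ⟨j, hj⟩ := m1
  exact emb_ne_sp N _ w hj

lemma B_ne_C (w : Bool) (b a : Fin (N+4)) :
    cycSub (Dgraph (N+6)) (cB N w b a) ≠ cycSub (Dgraph (N+6)) (cC N) := by
  intro h
  have m1 : sp N w ∈ (cycSub (Dgraph (N+6)) (cC N)).verts := by
    rw [← h]; exact ⟨0, rfl⟩
  obtain ⟨j, hj⟩ := m1
  exact emb_ne_sp N _ w hj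

def bval (b : Fin (N+4)) (t : Fin (N+2)) : Fin (N+4) := b + ((t.val + 2 : ℕ) : Fin (N+4))

lemma bval_cast_val (t : Fin (N+2)) : ((t.val + 2 : ℕ) : Fin (N+4)).val = t.val + 2 :=
  Fin.val_cast_of_lt (by omega)

lemma bval_ne (b : Fin (N+4)) (t : Fin (N+2)) : bval N b t ≠ b := by
  intro h
  have h2 : ((t.val + 2 : ℕ) : Fin (N+4)) = 0 := by
    have := h
    unfold bval at this
    nth_rewrite 2 [← add_zero b] at this
    exact add_left_cancel this
  have := congrArg Fin.val h2
  rw [bval_cast_val, Fin.val_zero] at this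
  omega

lemma bval_ne1 (b : Fin (N+4)) (t : Fin (N+2)) : bval N b t ≠ b + 1 := by
  intro h
  have h2 : ((t.val + 2 : ℕ) : Fin (N+4)) = 1 := add_left_cancel h
  have := congrArg Fin.val h2
  rw [bval_cast_val] at this
  have h1 : (1 : Fin (N+4)).val = 1 := by
    rw [Fin.val_one']
    exact Nat.one_mod_eq_one.mpr (by omega)
  omega

lemma bval_inj (b : Fin (N+4)) (t t' : Fin (N+2)) (h : bval N b t = bval N b t') : t = t' := by
  have h2 := add_left_cancel h
  have := congrArg Fin.val h2
  rw [bval_cast_val, bval_cast_val] at this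
  exact Fin.ext (by omega)

lemma bval_surj (b a : Fin (N+4)) (h1 : a ≠ b) (h2 : a ≠ b + 1) :
    ∃ t : Fin (N+2), bval N b t = a := by
  have hd0 : a - b ≠ 0 := fun h => h1 (by rwa [sub_eq_zero] at h)
  have hd1 : a - b ≠ 1 := fun h => h2 (by rw [← h]; ring)
  have hv0 : (a - b).val ≠ 0 := fun h => hd0 (Fin.ext (by simpa using h))
  have hv1 : (a - b).val ≠ 1 := by
    intro h
    apply hd1
    apply Fin.ext
    rw [h, Fin.val_one']
    exact (Nat.one_mod_eq_one.mpr (by omega)).symm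
  have hlt := (a - b).isLt
  refine ⟨⟨(a - b).val - 2, by omega⟩, ?_⟩
  unfold bval
  have : (((a - b).val - 2) + 2 : ℕ) = (a - b).val := by omega
  rw [this, Fin.cast_val_eq_self]
  ring

def Param (N : ℕ) : Type :=
  (Bool × Fin (N+4)) ⊕ (Bool × Fin (N+4) × Fin (N+2)) ⊕ PLift (N = 1)

noncomputable def toSub : Param N → {H : (Dgraph (N+6)).Subgraph // Nonempty (H.coe ≃g cycleGraph 5)}
  | .inl (w, i) =>
      ⟨cycSub _ (cA N w i), (nonempty_iso_iff _ _).2 ⟨_, cycMap_cA N w i, rfl⟩⟩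
  | .inr (.inl (w, b, t)) =>
      ⟨cycSub _ (cB N w b (bval N b t)), (nonempty_iso_iff _ _).2
        ⟨_, cycMap_cB N w b _ (bval_ne N b t) (bval_ne1 N b t), rfl⟩⟩
  | .inr (.inr hN) =>
      ⟨cycSub _ (cC N), (nonempty_iso_iff _ _).2 ⟨_, cycMap_cC N hN.down, rfl⟩⟩

lemma toSub_bij : Function.Bijective (toSub N) := by
  constructor
  · rintro (⟨w, i⟩ | ⟨w, b, t⟩ | ⟨hN⟩) (⟨w', i'⟩ | ⟨w', b', t'⟩ | ⟨hN'⟩) h <;>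
      simp only [toSub, Subtype.mk.injEq] at h
    · obtain ⟨hw, hi⟩ := injA N w w' i i' h
      rw [hw, hi]
    · exact absurd h (A_ne_B N w i w' b' (bval N b' t'))
    · exact absurd h (A_ne_C N w i)
    · exact absurd h.symm (A_ne_B N w' i' w b (bval N b t))
    · obtain ⟨hw, hb, ha⟩ := injB N w w' b (bval N b t) b' (bval N b' t')
        (bval_ne N b t) (bval_ne1 N b t) (bval_ne N b' t') (bval_ne1 N b' t') h
      subst hw
      subst hb
      rw [bval_inj N b t t' ha]
    · exact absurd h (B_ne_C N w b _)
    · exact absurd h.symm (A_ne_C N w' i')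
    · exact absurd h.symm (B_ne_C N w' b' _)
    · cases hN; cases hN'; rfl
  · rintro ⟨H, hiso⟩
    obtain ⟨c, hc, rfl⟩ := (nonempty_iso_iff _ _).1 hiso
    rcases classify N c hc with ⟨w, i, hEq⟩ | ⟨w, b, a, hab, hab1, hEq⟩ | ⟨hN, hEq⟩
    · exact ⟨.inl (w, i), Subtype.ext hEq.symm⟩
    · obtain ⟨t, ht⟩ := bval_surj N b a hab hab1
      refine ⟨.inr (.inl (w, b, t)), Subtype.ext ?_⟩
      show cycSub _ (cB N w b (bval N b t)) = _
      rw [ht]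
      exact hEq.symm
    · exact ⟨.inr (.inr ⟨hN⟩), Subtype.ext hEq.symm⟩

lemma card_param : Nat.card (Param N) = 2*(N+4) + 2*((N+4)*(N+2)) + (if N = 1 then 1 else 0) := by
  unfold Param
  rw [Nat.card_sum, Nat.card_sum, Nat.card_prod, Nat.card_prod, Nat.card_prod]
  simp only [Nat.card_eq_fintype_card, Fintype.card_bool, Fintype.card_fin]
  have hP : Nat.card (PLift (N = 1)) = if N = 1 then 1 else 0 := by
    split
    · rename_i hN
      have : Unique (PLift (N = 1)) := ⟨⟨⟨hN⟩⟩, fun a => rfl⟩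
      exact Nat.card_unique
    · rename_i hN
      have : IsEmpty (PLift (N = 1)) := ⟨fun x => hN x.down⟩
      exact Nat.card_of_isEmpty
  rw [← Nat.card_eq_fintype_card, hP]
  generalize (if N = 1 then 1 else 0) = q
  ring

lemma main_count : (Dgraph (N+6)).c5Count
    = 2*(N+4) + 2*((N+4)*(N+2)) + (if N = 1 then 1 else 0) := by
  rw [SimpleGraph.c5Count, ← Nat.card_eq_of_bijective (toSub N) (toSub_bij N), card_param]

end Dn
end C5Aux

/-- For `n = 6` or `n ≥ 8`, the graph `D n` contains exactly `2n² − 10n + 12` copies of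
`C₅`; the graph `D 7` contains exactly 41 copies of `C₅`; equivalently, for `n ≥ 8`,
`D n` contains exactly `2(n−2)(n−3)` copies of `C₅`. -/
theorem c5Count_Dgraph :
    (∀ n : ℕ, n = 6 ∨ 8 ≤ n → (Dgraph n).c5Count = 2 * n ^ 2 - 10 * n + 12) ∧
    (Dgraph 7).c5Count = 41 ∧
    (∀ n : ℕ, 8 ≤ n → (Dgraph n).c5Count = 2 * (n - 2) * (n - 3)) := by
  have master := C5Aux.main_count
  refine ⟨?_, ?_, ?_⟩
  · intro n hn
    obtain ⟨N, rfl⟩ : ∃ N, n = N + 6 := ⟨n - 6, by omega⟩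
    rw [master N, if_neg (by omega : N ≠ 1)]
    have h1 : (N+6)^2 = N^2 + 12*N + 36 := by ring
    have h2 : (N+4)*(N+2) = N^2 + 6*N + 8 := by ring
    rw [h1, h2]
    generalize N^2 = M
    omega
  · have h := master 1
    norm_num at h
    exact h
  · intro n hn
    obtain ⟨N, rfl⟩ : ∃ N, n = N + 6 := ⟨n - 6, by omega⟩
    rw [master N, if_neg (by omega : N ≠ 1),
      show N+6-2 = N+4 by omega, show N+6-3 = N+3 by omega]
    have h2 : (N+4)*(N+2) = N^2 + 6*N + 8 := by ring
    have h4 : 2*(N+4)*(N+3) = 2*(N^2 + 7*N + 12) := by ring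
    rw [h2, h4]
    generalize N^2 = M
    omega
end

section
/- Let G be a planar simple graph and let {u,v} be an edge of G. Then the subgraph of G induced by N(u) ∩ N(v) is a linear forest, i.e., a disjoint union of paths (equivalently: it is acyclic and every vertex has degree at most 2 in it). -/
open SimpleGraph

/-- `H` is a minor of `G`: there is a family of nonempty, connected, pairwise disjoint
branch sets in `G`, one for each vertex of `H`, with an edge of `G` between the branch
sets of any two adjacent vertices of `H`. -/
def SimpleGraph.IsMinor {W V : Type*} (H : SimpleGraph W) (G : SimpleGraph V) : Prop :=
  ∃ f : W → Set V,
    (∀ w, (f w).Nonempty) ∧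
    (∀ w, (G.induce (f w)).Connected) ∧
    (Pairwise fun w₁ w₂ => Disjoint (f w₁) (f w₂)) ∧
    ∀ ⦃w₁ w₂⦄, H.Adj w₁ w₂ → ∃ u ∈ f w₁, ∃ v ∈ f w₂, G.Adj u v

/-- A simple graph is planar iff (by Wagner's theorem) it has neither `K₅` nor `K₃,₃`
as a minor. -/
def SimpleGraph.IsPlanar {V : Type*} (G : SimpleGraph V) : Prop :=
  ¬ (completeGraph (Fin 5)).IsMinor G ∧
    ¬ (completeBipartiteGraph (Fin 3) (Fin 3)).IsMinor G

lemma induce_singleton_connected' {V : Type*} (G : SimpleGraph V) (a : V) :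
    (G.induce {a}).Connected := by
  have := (Subgraph.singletonSubgraph_connected (G := G) (v := a)).induce_verts
  simpa [SimpleGraph.singletonSubgraph] using this

lemma induce_support_connected' {V : Type*} {G : SimpleGraph V} {x y : V} (p : G.Walk x y) :
    (G.induce {v | v ∈ p.support}).Connected := by
  have := (p.toSubgraph_connected).induce_verts
  rwa [p.verts_toSubgraph] at this

/-- If `G` is planar and `{u, v}` is an edge of `G`, then the subgraph induced by
`N(u) ∩ N(v)` is a linear forest: it is acyclic and every vertex has degree at most 2
in it. -/
theorem common_nbhd_linear_forest {V : Type*} [Fintype V] (G : SimpleGraph V)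
    (hG : G.IsPlanar) (u v : V) (huv : G.Adj u v) :
    (G.induce (G.neighborSet u ∩ G.neighborSet v)).IsAcyclic ∧
    ∀ x, ((G.induce (G.neighborSet u ∩ G.neighborSet v)).neighborSet x).ncard ≤ 2 := by
  set S : Set V := G.neighborSet u ∩ G.neighborSet v with hSdef
  have huS : u ∉ S := fun h => G.irrefl h.1
  have hvS : v ∉ S := fun h => G.irrefl h.2
  have hadjU : ∀ y : S, G.Adj u ↑y := fun y => y.2.1
  have hadjV : ∀ y : S, G.Adj v ↑y := fun y => y.2.2
  constructor
  · -- acyclicity via K₅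
    intro r c hc
    apply hG.1
    -- decompose the cycle
    cases c with
    | nil => exact absurd rfl hc.ne_nil
    | @cons _ b _ h p =>
      cases p with
      | nil => exact absurd hc.three_le_length (by simp)
      | @cons _ e _ h2 q =>
        cases q with
        | nil => exact absurd hc.three_le_length (by simp)
        | @cons _ w _ h3 q2 =>
        obtain ⟨d, s, hdr, heq⟩ := Walk.exists_cons_eq_concat h3 q2
        -- nodup facts
        have hnd := hc.support_nodup
        rw [heq, Walk.support_cons, List.tail_cons, Walk.support_cons,
          Walk.support_concat] at hnd
        -- hnd : (b :: (s.support.concat r)).Nodup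
        rw [List.nodup_cons, List.mem_append, List.nodup_append'] at hnd
        obtain ⟨hbmem, hsnd, -, hdisj⟩ := hnd
        push_neg at hbmem
        obtain ⟨hbs, hbr⟩ := hbmem
        have hrsupp : r ∉ s.support := fun hmem => hdisj hmem (by simp)
        have hrb : r ≠ b := h.ne
        -- the mapped walk in G
        let emb : G.induce S ↪g G := SimpleGraph.Embedding.induce S
        let sg : G.Walk (↑e) (↑d) := s.map emb.toHom
        have hsgsupp : sg.support = s.support.map Subtype.val := Walk.support_map _ _
        set C : Set V := {w | w ∈ sg.support} with hCdef
        have hmemC : ∀ y : S, ↑y ∈ C ↔ y ∈ s.support := by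
          intro y
          simp only [hCdef, Set.mem_setOf_eq, hsgsupp, List.mem_map]
          constructor
          · rintro ⟨z, hz, hzy⟩; rwa [Subtype.val_injective hzy] at hz
          · intro hy; exact ⟨y, hy, rfl⟩
        have hCS : ∀ w ∈ C, w ∈ S := by
          intro w hw
          rw [hCdef, Set.mem_setOf_eq, hsgsupp, List.mem_map] at hw
          obtain ⟨z, -, rfl⟩ := hw
          exact z.2
        have heC : (↑e : V) ∈ C := (hmemC e).2 s.start_mem_support
        have hdC : (↑d : V) ∈ C := (hmemC d).2 s.end_mem_support
        refine ⟨![{u}, {v}, {↑r}, {↑b}, C], ?_, ?_, ?_, ?_⟩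
        · intro w
          fin_cases w <;>
            simp only [Matrix.cons_val_zero, Matrix.cons_val_one, Matrix.head_cons,
              Matrix.cons_val_two, Matrix.tail_cons, Matrix.cons_val_three,
              Matrix.cons_val_four] <;>
            first
            | exact Set.singleton_nonempty _
            | exact ⟨↑e, heC⟩
        · intro w
          fin_cases w <;>
            simp only [Matrix.cons_val_zero, Matrix.cons_val_one, Matrix.head_cons,
              Matrix.cons_val_two, Matrix.tail_cons, Matrix.cons_val_three,
              Matrix.cons_val_four] <;>
            first
            | exact induce_singleton_connected' G _
            | exact induce_support_connected' sg
        · have d1 : u ≠ v := huv.ne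
          have d2 : ∀ y : S, u ≠ ↑y := fun y hy => huS (hy ▸ y.2)
          have d3 : ∀ y : S, v ≠ ↑y := fun y hy => hvS (hy ▸ y.2)
          have d4 : (↑r : V) ≠ ↑b := fun hy => hrb (Subtype.val_injective hy)
          have d5 : u ∉ C := fun hy => huS (hCS u hy)
          have d6 : v ∉ C := fun hy => hvS (hCS v hy)
          have d7 : (↑r : V) ∉ C := fun hy => hrsupp ((hmemC r).1 hy)
          have d8 : (↑b : V) ∉ C := fun hy => hbs ((hmemC b).1 hy)
          intro i j hij
          fin_cases i <;> fin_cases j <;>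
            simp only [Matrix.cons_val_zero, Matrix.cons_val_one, Matrix.head_cons,
              Matrix.cons_val_two, Matrix.tail_cons, Matrix.cons_val_three,
              Matrix.cons_val_four] <;>
            first
            | exact absurd rfl hij
            | exact Set.disjoint_singleton.mpr d1
            | exact Set.disjoint_singleton.mpr d1.symm
            | exact Set.disjoint_singleton.mpr (d2 r)
            | exact Set.disjoint_singleton.mpr (d2 r).symm
            | exact Set.disjoint_singleton.mpr (d2 b)
            | exact Set.disjoint_singleton.mpr (d2 b).symm
            | exact Set.disjoint_singleton.mpr (d3 r)
            | exact Set.disjoint_singleton.mpr (d3 r).symm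
            | exact Set.disjoint_singleton.mpr (d3 b)
            | exact Set.disjoint_singleton.mpr (d3 b).symm
            | exact Set.disjoint_singleton.mpr d4
            | exact Set.disjoint_singleton.mpr d4.symm
            | exact Set.disjoint_singleton_left.mpr d5
            | exact Set.disjoint_singleton_right.mpr d5
            | exact Set.disjoint_singleton_left.mpr d6
            | exact Set.disjoint_singleton_right.mpr d6
            | exact Set.disjoint_singleton_left.mpr d7
            | exact Set.disjoint_singleton_right.mpr d7
            | exact Set.disjoint_singleton_left.mpr d8
            | exact Set.disjoint_singleton_right.mpr d8
        · intro w1 w2 hadj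
          have gadj : ∀ y z : S, (G.induce S).Adj y z → G.Adj ↑y ↑z := fun y z hyz => hyz
          fin_cases w1 <;> fin_cases w2 <;>
            simp only [Matrix.cons_val_zero, Matrix.cons_val_one, Matrix.head_cons,
              Matrix.cons_val_two, Matrix.tail_cons, Matrix.cons_val_three,
              Matrix.cons_val_four] <;>
            first
            | exact absurd rfl hadj
            | exact ⟨u, rfl, v, rfl, huv⟩
            | exact ⟨v, rfl, u, rfl, huv.symm⟩
            | exact ⟨u, rfl, ↑r, rfl, hadjU r⟩
            | exact ⟨↑r, rfl, u, rfl, (hadjU r).symm⟩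
            | exact ⟨u, rfl, ↑b, rfl, hadjU b⟩
            | exact ⟨↑b, rfl, u, rfl, (hadjU b).symm⟩
            | exact ⟨u, rfl, ↑e, heC, hadjU e⟩
            | exact ⟨↑e, heC, u, rfl, (hadjU e).symm⟩
            | exact ⟨v, rfl, ↑r, rfl, hadjV r⟩
            | exact ⟨↑r, rfl, v, rfl, (hadjV r).symm⟩
            | exact ⟨v, rfl, ↑b, rfl, hadjV b⟩
            | exact ⟨↑b, rfl, v, rfl, (hadjV b).symm⟩
            | exact ⟨v, rfl, ↑e, heC, hadjV e⟩
            | exact ⟨↑e, heC, v, rfl, (hadjV e).symm⟩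
            | exact ⟨↑r, rfl, ↑b, rfl, gadj _ _ h⟩
            | exact ⟨↑b, rfl, ↑r, rfl, (gadj _ _ h).symm⟩
            | exact ⟨↑r, rfl, ↑d, hdC, (gadj _ _ hdr).symm⟩
            | exact ⟨↑d, hdC, ↑r, rfl, gadj _ _ hdr⟩
            | exact ⟨↑b, rfl, ↑e, heC, gadj _ _ h2⟩
            | exact ⟨↑e, heC, ↑b, rfl, (gadj _ _ h2).symm⟩
            | exact ⟨↑e, heC, ↑b, rfl, (gadj _ _ h2).symm⟩
  · -- max degree ≤ 2 via K₃,₃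
    intro x
    by_contra hx
    push_neg at hx
    apply hG.2
    have hx3 : 3 ≤ ((G.induce S).neighborSet x).ncard := hx
    obtain ⟨t, hts, ht3⟩ := Set.exists_subset_card_eq hx3
    obtain ⟨a, b, c, hab, hac, hbc, rfl⟩ := Set.ncard_eq_three.mp ht3
    have ha : (G.induce S).Adj x a := hts (by simp)
    have hb : (G.induce S).Adj x b := hts (by simp)
    have hc : (G.induce S).Adj x c := hts (by simp)
    have gadj : ∀ y z : S, (G.induce S).Adj y z → G.Adj ↑y ↑z := fun y z hyz => hyz
    refine ⟨fun w => Sum.elim ![{u}, {v}, {↑x}] ![{↑a}, {↑b}, {↑c}] w, ?_, ?_, ?_, ?_⟩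
    · rintro (i | i) <;> fin_cases i <;>
        simp only [Sum.elim_inl, Sum.elim_inr, Matrix.cons_val_zero, Matrix.cons_val_one,
          Matrix.head_cons, Matrix.cons_val_two, Matrix.tail_cons] <;>
        exact Set.singleton_nonempty _
    · rintro (i | i) <;> fin_cases i <;>
        simp only [Sum.elim_inl, Sum.elim_inr, Matrix.cons_val_zero, Matrix.cons_val_one,
          Matrix.head_cons, Matrix.cons_val_two, Matrix.tail_cons] <;>
        exact induce_singleton_connected' G _
    · have d1 : u ≠ v := huv.ne
      have d2 : ∀ y : S, u ≠ ↑y := fun y hy => huS (hy ▸ y.2)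
      have d3 : ∀ y : S, v ≠ ↑y := fun y hy => hvS (hy ▸ y.2)
      have dxa : (↑x : V) ≠ ↑a := fun hy => ha.ne (Subtype.val_injective hy)
      have dxb : (↑x : V) ≠ ↑b := fun hy => hb.ne (Subtype.val_injective hy)
      have dxc : (↑x : V) ≠ ↑c := fun hy => hc.ne (Subtype.val_injective hy)
      have dab : (↑a : V) ≠ ↑b := fun hy => hab (Subtype.val_injective hy)
      have dac : (↑a : V) ≠ ↑c := fun hy => hac (Subtype.val_injective hy)
      have dbc : (↑b : V) ≠ ↑c := fun hy => hbc (Subtype.val_injective hy)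
      rintro (i | i) (j | j) hij <;> fin_cases i <;> fin_cases j <;>
        simp only [Sum.elim_inl, Sum.elim_inr, Matrix.cons_val_zero, Matrix.cons_val_one,
          Matrix.head_cons, Matrix.cons_val_two, Matrix.tail_cons] <;>
        first
        | exact absurd rfl hij
        | exact Set.disjoint_singleton.mpr d1
        | exact Set.disjoint_singleton.mpr d1.symm
        | exact Set.disjoint_singleton.mpr (d2 x)
        | exact Set.disjoint_singleton.mpr (d2 x).symm
        | exact Set.disjoint_singleton.mpr (d2 a)
        | exact Set.disjoint_singleton.mpr (d2 a).symm
        | exact Set.disjoint_singleton.mpr (d2 b)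
        | exact Set.disjoint_singleton.mpr (d2 b).symm
        | exact Set.disjoint_singleton.mpr (d2 c)
        | exact Set.disjoint_singleton.mpr (d2 c).symm
        | exact Set.disjoint_singleton.mpr (d3 x)
        | exact Set.disjoint_singleton.mpr (d3 x).symm
        | exact Set.disjoint_singleton.mpr (d3 a)
        | exact Set.disjoint_singleton.mpr (d3 a).symm
        | exact Set.disjoint_singleton.mpr (d3 b)
        | exact Set.disjoint_singleton.mpr (d3 b).symm
        | exact Set.disjoint_singleton.mpr (d3 c)
        | exact Set.disjoint_singleton.mpr (d3 c).symm
        | exact Set.disjoint_singleton.mpr dxa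
        | exact Set.disjoint_singleton.mpr dxa.symm
        | exact Set.disjoint_singleton.mpr dxb
        | exact Set.disjoint_singleton.mpr dxb.symm
        | exact Set.disjoint_singleton.mpr dxc
        | exact Set.disjoint_singleton.mpr dxc.symm
        | exact Set.disjoint_singleton.mpr dab
        | exact Set.disjoint_singleton.mpr dab.symm
        | exact Set.disjoint_singleton.mpr dac
        | exact Set.disjoint_singleton.mpr dac.symm
        | exact Set.disjoint_singleton.mpr dbc
        | exact Set.disjoint_singleton.mpr dbc.symm
    · rintro (i | i) (j | j) hadj
      case inl.inl => simp at hadj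
      case inr.inr => simp at hadj
      case inl.inr =>
        fin_cases i <;> fin_cases j <;>
          simp only [Sum.elim_inl, Sum.elim_inr, Matrix.cons_val_zero, Matrix.cons_val_one,
            Matrix.head_cons, Matrix.cons_val_two, Matrix.tail_cons]
        · exact ⟨u, rfl, ↑a, rfl, hadjU a⟩
        · exact ⟨u, rfl, ↑b, rfl, hadjU b⟩
        · exact ⟨u, rfl, ↑c, rfl, hadjU c⟩
        · exact ⟨v, rfl, ↑a, rfl, hadjV a⟩
        · exact ⟨v, rfl, ↑b, rfl, hadjV b⟩
        · exact ⟨v, rfl, ↑c, rfl, hadjV c⟩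
        · exact ⟨↑x, rfl, ↑a, rfl, gadj _ _ ha⟩
        · exact ⟨↑x, rfl, ↑b, rfl, gadj _ _ hb⟩
        · exact ⟨↑x, rfl, ↑c, rfl, gadj _ _ hc⟩
      case inr.inl =>
        fin_cases i <;> fin_cases j <;>
          simp only [Sum.elim_inl, Sum.elim_inr, Matrix.cons_val_zero, Matrix.cons_val_one,
            Matrix.head_cons, Matrix.cons_val_two, Matrix.tail_cons]
        · exact ⟨↑a, rfl, u, rfl, (hadjU a).symm⟩
        · exact ⟨↑a, rfl, v, rfl, (hadjV a).symm⟩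
        · exact ⟨↑a, rfl, ↑x, rfl, (gadj _ _ ha).symm⟩
        · exact ⟨↑b, rfl, u, rfl, (hadjU b).symm⟩
        · exact ⟨↑b, rfl, v, rfl, (hadjV b).symm⟩
        · exact ⟨↑b, rfl, ↑x, rfl, (gadj _ _ hb).symm⟩
        · exact ⟨↑c, rfl, u, rfl, (hadjU c).symm⟩
        · exact ⟨↑c, rfl, v, rfl, (hadjV c).symm⟩
        · exact ⟨↑c, rfl, ↑x, rfl, (gadj _ _ hc).symm⟩
end

section
/- Let G be a planar simple graph on k ≥ 3 vertices and let {u,v} be an edge of G. Then the number of paths of length three (paths with 4 vertices and 3 edges) in G from u to v is at most 2(k − 3). -/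
open SimpleGraph

namespace PlanarPaths

variable {V : Type*}

/-- reachability within a set -/
inductive RIn (G : SimpleGraph V) (s : Set V) : V → V → Prop
  | refl {x : V} (hx : x ∈ s) : RIn G s x x
  | tail {x y z : V} (hxy : RIn G s x y) (h : G.Adj y z) (hz : z ∈ s) : RIn G s x z

namespace RIn

variable {G G' : SimpleGraph V} {s t : Set V} {x y z : V}

theorem mem_left (h : RIn G s x y) : x ∈ s := by
  induction h with
  | refl hx => exact hx
  | tail _ _ _ ih => exact ih

theorem mem_right (h : RIn G s x y) : y ∈ s := by
  induction h with
  | refl hx => exact hx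
  | tail _ _ hz _ => exact hz

theorem trans (h1 : RIn G s x y) (h2 : RIn G s y z) : RIn G s x z := by
  induction h2 with
  | refl _ => exact h1
  | tail _ ha hz ih => exact ih.tail ha hz

theorem head (hx : x ∈ s) (ha : G.Adj x y) (h : RIn G s y z) : RIn G s x z :=
  RIn.trans (RIn.tail (.refl hx) ha h.mem_left) h

theorem symm (h : RIn G s x y) : RIn G s y x := by
  induction h with
  | refl hx => exact .refl hx
  | tail _ ha hz ih => exact head hz ha.symm ih

theorem mono (hst : s ⊆ t) (h : RIn G s x y) : RIn G t x y := by
  induction h with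
  | refl hx => exact .refl (hst hx)
  | tail _ ha hz ih => exact ih.tail ha (hst hz)

theorem mono_graph (hGG : G ≤ G') (h : RIn G s x y) : RIn G' s x y := by
  induction h with
  | refl hx => exact .refl hx
  | tail _ ha hz ih => exact ih.tail (hGG ha) hz

end RIn

def compIn (G : SimpleGraph V) (s : Set V) (x : V) : Set V := {y | RIn G s x y}

theorem mem_compIn_self {G : SimpleGraph V} {s : Set V} {x : V} (hx : x ∈ s) :
    x ∈ compIn G s x := RIn.refl hx

theorem compIn_subset {G : SimpleGraph V} {s : Set V} {x : V} : compIn G s x ⊆ s :=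
  fun _ h => h.mem_right

theorem compIn_closed {G : SimpleGraph V} {s : Set V} {x y z : V}
    (hy : y ∈ compIn G s x) (ha : G.Adj y z) (hz : z ∈ s) : z ∈ compIn G s x :=
  RIn.tail hy ha hz

theorem rIn_compIn {G : SimpleGraph V} {s : Set V} {x y : V} (h : RIn G s x y) :
    RIn G (compIn G s x) x y := by
  induction h with
  | refl hx => exact .refl (mem_compIn_self hx)
  | @tail b c h ha hz ih => exact ih.tail ha (RIn.tail h ha hz)

theorem rIn_of_mem_compIn {G : SimpleGraph V} {s : Set V} {x y z : V}
    (hy : y ∈ compIn G s x) (hz : z ∈ compIn G s x) : RIn G (compIn G s x) y z :=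
  (rIn_compIn hy).symm.trans (rIn_compIn hz)

/-- first exit lemma -/
theorem RIn.avoid {G : SimpleGraph V} {s B : Set V} {x y : V}
    (h : RIn G s x y) (hx : x ∈ s \ B) :
    RIn G (s \ B) x y ∨ ∃ w b, RIn G (s \ B) x w ∧ G.Adj w b ∧ b ∈ B ∧ b ∈ s := by
  induction h with
  | refl _ => exact Or.inl (.refl hx)
  | @tail b c h ha hz ih =>
    rcases ih with h' | h'
    · by_cases hzB : c ∈ B
      · exact Or.inr ⟨_, _, h', ha, hzB, hz⟩
      · exact Or.inl (h'.tail ha ⟨hz, hzB⟩)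
    · exact Or.inr h'

theorem rIn_of_walk {G : SimpleGraph V} {s : Set V} {a b : ↑s}
    (p : (G.induce s).Walk a b) : RIn G s a b := by
  induction p with
  | nil => exact .refl (Subtype.mem _)
  | cons h _ ih => exact RIn.head (Subtype.mem _) h ih

theorem reachable_of_rIn {G : SimpleGraph V} {s : Set V} {x y : V} (h : RIn G s x y) :
    ∃ (hx : x ∈ s) (hy : y ∈ s), (G.induce s).Reachable ⟨x, hx⟩ ⟨y, hy⟩ := by
  induction h with
  | refl hx => exact ⟨hx, hx, .refl _⟩
  | @tail b c h ha hz ih =>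
    obtain ⟨hx, hy, r⟩ := ih
    exact ⟨hx, hz, r.trans (SimpleGraph.Adj.reachable (by exact ha))⟩

theorem induce_connected_iff {G : SimpleGraph V} {s : Set V} :
    (G.induce s).Connected ↔ s.Nonempty ∧ ∀ x ∈ s, ∀ y ∈ s, RIn G s x y := by
  constructor
  · intro h
    obtain ⟨x0⟩ := h.nonempty
    refine ⟨⟨x0.1, x0.2⟩, fun x hx y hy => ?_⟩
    obtain ⟨p⟩ := h.preconnected ⟨x, hx⟩ ⟨y, hy⟩
    exact rIn_of_walk p
  · rintro ⟨⟨x0, hx0⟩, hR⟩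
    haveI : Nonempty ↑s := ⟨⟨x0, hx0⟩⟩
    refine ⟨fun a b => ?_⟩
    obtain ⟨hx, hy, r⟩ := reachable_of_rIn (hR _ a.2 _ b.2)
    simpa using r

theorem connected_induce_of {G : SimpleGraph V} {s : Set V} {x : V} (hx : x ∈ s)
    (h : ∀ y ∈ s, RIn G s x y) : (G.induce s).Connected :=
  induce_connected_iff.mpr ⟨⟨x, hx⟩, fun a ha b hb => (h a ha).symm.trans (h b hb)⟩

theorem connected_induce_singleton {G : SimpleGraph V} {a : V} :
    (G.induce {a}).Connected :=
  connected_induce_of rfl (by rintro y rfl; exact .refl rfl)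

theorem connected_induce_pair {G : SimpleGraph V} {a b : V} (h : G.Adj a b) :
    (G.induce {a, b}).Connected := by
  refine connected_induce_of (Set.mem_insert _ _) ?_
  rintro y (rfl | rfl)
  · exact .refl (Set.mem_insert _ _)
  · exact RIn.tail (.refl (Set.mem_insert _ _)) h (Set.mem_insert_of_mem _ rfl)

theorem connected_induce_compIn {G : SimpleGraph V} {s : Set V} {x : V} (hx : x ∈ s) :
    (G.induce (compIn G s x)).Connected :=
  connected_induce_of (mem_compIn_self hx) (fun _ hy => rIn_compIn hy)


/-! ### minor helpers -/

theorem minor_mono {W : Type*} {H : SimpleGraph W} {G G' : SimpleGraph V}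
    (h : H.IsMinor G) (hle : G ≤ G') : H.IsMinor G' := by
  obtain ⟨f, hne, hconn, hdisj, hadj⟩ := h
  refine ⟨f, hne, fun w => ?_, hdisj, fun w₁ w₂ hw => ?_⟩
  · obtain ⟨hne', hR⟩ := induce_connected_iff.mp (hconn w)
    exact induce_connected_iff.mpr ⟨hne', fun x hx y hy => (hR x hx y hy).mono_graph hle⟩
  · obtain ⟨a, ha, b, hb, hab⟩ := hadj hw
    exact ⟨a, ha, b, hb, hle hab⟩

/-- contraction of the edge `x y`, absorbing `x` into `y`; `x` becomes isolated. -/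
def contract (G : SimpleGraph V) (x y : V) : SimpleGraph V where
  Adj a b := a ≠ b ∧ a ≠ x ∧ b ≠ x ∧
    (G.Adj a b ∨ (a = y ∧ G.Adj x b) ∨ (b = y ∧ G.Adj x a))
  symm := ⟨by
    rintro a b ⟨h1, h2, h3, h4⟩
    refine ⟨h1.symm, h3, h2, ?_⟩
    rcases h4 with h | ⟨rfl, h⟩ | ⟨rfl, h⟩
    · exact Or.inl h.symm
    · exact Or.inr (Or.inr ⟨rfl, h⟩)
    · exact Or.inr (Or.inl ⟨rfl, h⟩)⟩
  loopless := ⟨fun a h => h.1 rfl⟩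

theorem contract_le {G : SimpleGraph V} {x y : V} {a b : V}
    (h : G.Adj a b) (ha : a ≠ x) (hb : b ≠ x) : (contract G x y).Adj a b :=
  ⟨h.ne, ha, hb, Or.inl h⟩

theorem contract_isolated {G : SimpleGraph V} {x y b : V} (h : (contract G x y).Adj x b) :
    False := h.2.1 rfl

theorem rIn_contract {G : SimpleGraph V} {x y : V} (hxy : G.Adj x y) {s : Set V}
    {a b : V} (hx : x ∉ s) (h : RIn (contract G x y) s a b) :
    RIn G (insert x s) a b := by
  induction h with
  | refl hx => exact .refl (Set.mem_insert_of_mem _ hx)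
  | @tail b c h ha hz ih =>
    obtain ⟨hne, hbx, hcx, had⟩ := ha
    rcases had with h' | ⟨rfl, h'⟩ | ⟨rfl, h'⟩
    · exact ih.tail h' (Set.mem_insert_of_mem _ hz)
    · exact (ih.tail hxy.symm (Set.mem_insert _ _)).tail h' (Set.mem_insert_of_mem _ hz)
    · exact (ih.tail h'.symm (Set.mem_insert _ _)).tail hxy (Set.mem_insert_of_mem _ hz)

theorem rIn_contract' {G : SimpleGraph V} {x y : V} {s : Set V}
    {a b : V} (hy : y ∉ s) (h : RIn (contract G x y) s a b) :
    RIn G s a b := by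
  induction h with
  | refl hx => exact .refl hx
  | @tail b c h ha hz ih =>
    obtain ⟨hne, hbx, hcx, had⟩ := ha
    rcases had with h' | ⟨rfl, h'⟩ | ⟨rfl, h'⟩
    · exact ih.tail h' hz
    · exact absurd h.mem_right hy
    · exact absurd hz hy

theorem RIn.eq_of_isolated {G : SimpleGraph V} {s : Set V} {x a : V}
    (hiso : ∀ b, ¬ G.Adj x b) (h : RIn G s x a) : x = a := by
  induction h with
  | refl _ => rfl
  | @tail b c h ha hz ih => exact absurd (ih ▸ ha) (hiso c)

theorem contract_minor {W : Type*} {H : SimpleGraph W} {G : SimpleGraph V} {x y : V}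
    (hxy : G.Adj x y) (hH : ∀ w : W, ∃ w', H.Adj w w')
    (h : H.IsMinor (contract G x y)) : H.IsMinor G := by
  classical
  obtain ⟨f, hne, hconn, hdisj, hadj⟩ := h
  have hiso : ∀ b, ¬ (contract G x y).Adj x b := fun b hb => hb.2.1 rfl
  have hxf : ∀ w, x ∉ f w := by
    intro w hxw
    obtain ⟨w', hw'⟩ := hH w
    obtain ⟨hne', hR⟩ := induce_connected_iff.mp (hconn w)
    obtain ⟨a, ha, b, hb, hab⟩ := hadj hw'
    have hxa : x = a := RIn.eq_of_isolated hiso (hR _ hxw _ ha)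
    exact hiso b (hxa ▸ hab)
  have hgw : ∀ w, y ∈ f w →
      (f w ∪ {x' | x' = x ∧ y ∈ f w}) = insert x (f w) := by
    intro w hy; ext a
    simp only [Set.mem_union, Set.mem_setOf_eq, Set.mem_insert_iff, hy, and_true]
    tauto
  have hgw' : ∀ w, y ∉ f w → (f w ∪ {x' | x' = x ∧ y ∈ f w}) = f w := by
    intro w hy; ext a
    simp only [Set.mem_union, Set.mem_setOf_eq, hy, and_false, or_false]
  refine ⟨fun w => f w ∪ {x' | x' = x ∧ y ∈ f w}, fun w => ?_, fun w => ?_,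
    fun w₁ w₂ hww => ?_, fun w₁ w₂ hw => ?_⟩
  · exact (hne w).mono Set.subset_union_left
  · dsimp only
    by_cases hy : y ∈ f w
    · rw [hgw w hy]
      obtain ⟨hne', hR⟩ := induce_connected_iff.mp (hconn w)
      refine connected_induce_of (x := y) (Set.mem_insert_of_mem _ hy) ?_
      rintro z (rfl | hz)
      · exact RIn.tail (.refl (Set.mem_insert_of_mem _ hy)) hxy.symm (Set.mem_insert _ _)
      · exact rIn_contract hxy (hxf w) (hR _ hy _ hz)
    · rw [hgw' w hy]
      obtain ⟨hne', hR⟩ := induce_connected_iff.mp (hconn w)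
      exact induce_connected_iff.mpr ⟨hne', fun a ha b hb => rIn_contract' hy (hR a ha b hb)⟩
  · have hd' := Set.disjoint_left.mp (hdisj hww)
    refine Set.disjoint_left.mpr ?_
    rintro a (ha | ⟨rfl, hy1⟩) hb
    · rcases hb with hb | ⟨rfl, hy2⟩
      · exact hd' ha hb
      · exact hxf w₁ ha
    · rcases hb with hb | ⟨-, hy2⟩
      · exact hxf w₂ hb
      · exact hd' hy1 hy2
  · obtain ⟨a, ha, b, hb, hab⟩ := hadj hw
    obtain ⟨hne', hax, hbx, had⟩ := hab
    rcases had with h' | ⟨hay, h'⟩ | ⟨hby, h'⟩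
    · exact ⟨a, Or.inl ha, b, Or.inl hb, h'⟩
    · exact ⟨x, Or.inr ⟨rfl, hay ▸ ha⟩, b, Or.inl hb, h'⟩
    · exact ⟨a, Or.inl ha, x, Or.inr ⟨rfl, hby ▸ hb⟩, h'.symm⟩

/-! ### four connected pairwise-adjacent branch sets -/

def FourSets (G : SimpleGraph V) (T : Set V) : Prop :=
  ∃ f : Fin 4 → Set V, (∀ i, f i ⊆ T) ∧ (∀ i, (f i).Nonempty) ∧
    (∀ i, (G.induce (f i)).Connected) ∧ (Pairwise fun i j => Disjoint (f i) (f j)) ∧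
    ∀ i j, i ≠ j → ∃ a ∈ f i, ∃ b ∈ f j, G.Adj a b

theorem foursets_of {G : SimpleGraph V} {T : Set V} (s : Fin 4 → Set V)
    (hT : ∀ i, s i ⊆ T) (hne : ∀ i, (s i).Nonempty)
    (hconn : ∀ i, (G.induce (s i)).Connected)
    (hdisj : ∀ i j, i < j → Disjoint (s i) (s j))
    (hadj : ∀ i j, i < j → ∃ a ∈ s i, ∃ b ∈ s j, G.Adj a b) : FourSets G T := by
  refine ⟨s, hT, hne, hconn, fun i j hij => ?_, fun i j hij => ?_⟩
  · rcases lt_or_gt_of_ne hij with h | h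
    · exact hdisj i j h
    · exact (hdisj j i h).symm
  · rcases lt_or_gt_of_ne hij with h | h
    · exact hadj i j h
    · obtain ⟨a, ha, b, hb, hab⟩ := hadj j i h
      exact ⟨b, hb, a, ha, hab.symm⟩

theorem foursets_contract [Fintype V] {G : SimpleGraph V} {T : Set V} {x y : V}
    (hxy : G.Adj x y) (hxT : x ∈ T)
    (h : FourSets (contract G x y) (T \ {x})) : FourSets G T := by
  obtain ⟨f, hT, hne, hconn, hdisj, hadj⟩ := h
  have hxf : ∀ i, x ∉ f i := fun i hx => (hT i hx).2 rfl
  have hgw : ∀ i, y ∈ f i →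
      (f i ∪ {x' | x' = x ∧ y ∈ f i}) = insert x (f i) := by
    intro i hy; ext a
    simp only [Set.mem_union, Set.mem_setOf_eq, Set.mem_insert_iff, hy, and_true]
    tauto
  have hgw' : ∀ i, y ∉ f i → (f i ∪ {x' | x' = x ∧ y ∈ f i}) = f i := by
    intro i hy; ext a
    simp only [Set.mem_union, Set.mem_setOf_eq, hy, and_false, or_false]
  refine ⟨fun i => f i ∪ {x' | x' = x ∧ y ∈ f i}, fun i => ?_, fun i => ?_, fun i => ?_,
    fun i j hij => ?_, fun i j hij => ?_⟩
  · rintro a (ha | ⟨rfl, -⟩)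
    · exact (hT i ha).1
    · exact hxT
  · exact (hne i).mono Set.subset_union_left
  · dsimp only
    by_cases hy : y ∈ f i
    · rw [hgw i hy]
      obtain ⟨hne', hR⟩ := induce_connected_iff.mp (hconn i)
      refine connected_induce_of (x := y) (Set.mem_insert_of_mem _ hy) ?_
      rintro z (rfl | hz)
      · exact RIn.tail (.refl (Set.mem_insert_of_mem _ hy)) hxy.symm (Set.mem_insert _ _)
      · exact rIn_contract hxy (hxf i) (hR _ hy _ hz)
    · rw [hgw' i hy]
      obtain ⟨hne', hR⟩ := induce_connected_iff.mp (hconn i)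
      exact induce_connected_iff.mpr ⟨hne', fun a ha b hb => rIn_contract' hy (hR a ha b hb)⟩
  · have hd' := Set.disjoint_left.mp (hdisj hij)
    refine Set.disjoint_left.mpr ?_
    rintro a (ha | ⟨rfl, hy1⟩) hb
    · rcases hb with hb | ⟨rfl, hy2⟩
      · exact hd' ha hb
      · exact hxf i ha
    · rcases hb with hb | ⟨-, hy2⟩
      · exact hxf j hb
      · exact hd' hy1 hy2
  · obtain ⟨a, ha, b, hb, hab⟩ := hadj i j hij
    obtain ⟨hne', hax, hbx, had⟩ := hab
    rcases had with h' | ⟨hay, h'⟩ | ⟨hby, h'⟩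
    · exact ⟨a, Or.inl ha, b, Or.inl hb, h'⟩
    · exact ⟨x, Or.inr ⟨rfl, hay ▸ ha⟩, b, Or.inl hb, h'⟩
    · exact ⟨a, Or.inl ha, x, Or.inr ⟨rfl, hby ▸ hb⟩, h'.symm⟩

/-! ### minimal-component descent lemmas -/

section Terminal

variable [Fintype V] {G : SimpleGraph V} {T : Set V}

/-- the case where the common neighbour `q` of `c,p` is `a` (or symmetrically `b`). -/
theorem case_qa {a b c p : V}
    (hmin : ∀ a' b' c', a' ∈ T → b' ∈ T → c' ∈ T → G.Adj a' b' → G.Adj c' a' → G.Adj c' b' →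
      (compIn G (T \ {a, b}) c).ncard ≤ (compIn G (T \ {a', b'}) c').ncard)
    (ha : a ∈ T) (hb : b ∈ T) (hc : c ∈ T)
    (hab : G.Adj a b) (hca : G.Adj c a) (hcb : G.Adj c b)
    (hp : p ∈ T) (hcp : G.Adj c p) (hpa0 : p ≠ a) (hpb0 : p ≠ b)
    (hpa : G.Adj p a) : FourSets G T := by
  classical
  set D : Set V := compIn G ((T \ {a, c}) \ {b}) p with hD
  have hpmem : p ∈ (T \ {a, c}) \ {b} :=
    ⟨⟨hp, by simp [hpa0, hcp.ne']⟩, by simpa using hpb0⟩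
  by_cases hw : ∃ w ∈ D, G.Adj w b
  · refine foursets_of ![{a}, {c}, {b}, D] ?_ ?_ ?_ ?_ ?_
    · intro i
      fin_cases i <;> simp only [Matrix.cons_val_zero, Matrix.cons_val_one, Matrix.head_cons]
      · exact Set.singleton_subset_iff.mpr ha
      · exact Set.singleton_subset_iff.mpr hc
      · exact Set.singleton_subset_iff.mpr hb
      · exact fun z hz => (compIn_subset hz).1.1
    · intro i
      fin_cases i <;>
        first
          | exact Set.singleton_nonempty _
          | exact ⟨p, mem_compIn_self hpmem⟩
    · intro i
      fin_cases i <;>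
        first
          | exact connected_induce_singleton
          | exact connected_induce_compIn hpmem
    · intro i j hij
      have hDd : ∀ z : V, z ∈ D → z ∈ (T \ {a, c}) \ {b} := fun z hz => compIn_subset hz
      fin_cases i <;> fin_cases j <;> simp_all <;>
        first
          | exact hca.ne'
          | exact hab.ne
          | (refine Set.disjoint_singleton_left.mpr fun hmem => ?_) <;> simp_all
          | exact hcb.ne
          | skip
      all_goals
        try exact fun hmem => by have := hDd _ hmem; simp_all
    · intro i j hij
      have hpD : p ∈ D := mem_compIn_self hpmem
      obtain ⟨w, hwD, hwb⟩ := hw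
      fin_cases i <;> fin_cases j <;>
        first
        | exact absurd hij (by decide)
        | exact ⟨a, rfl, c, rfl, hca.symm⟩
        | exact ⟨a, rfl, b, rfl, hab⟩
        | exact ⟨a, rfl, p, hpD, hpa.symm⟩
        | exact ⟨c, rfl, b, rfl, hcb⟩
        | exact ⟨c, rfl, p, hpD, hcp⟩
        | exact ⟨b, rfl, w, hwD, hwb.symm⟩
  · exfalso
    have hEK : compIn G (T \ {a, c}) p ⊆ compIn G (T \ {a, b}) c \ {c} := by
      intro z hz
      have hz' : RIn G (T \ {a, c}) p z := hz
      rcases hz'.avoid (B := {b}) ⟨hpmem.1, hpmem.2⟩ with h1 | ⟨w, b', h1, h2, hb', _⟩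
      · have hz2 : RIn G (T \ {a, b}) p z := by
          refine h1.mono ?_
          rintro t ⟨⟨ht, ht2⟩, ht3⟩
          simp only [Set.mem_insert_iff, Set.mem_singleton_iff] at ht2 ht3
          exact ⟨ht, by simp [ht3]; tauto⟩
        refine ⟨RIn.head ⟨hc, by simp [hca.ne, hcb.ne]⟩ hcp hz2, ?_⟩
        have := h1.mem_right
        simp only [Set.mem_diff, Set.mem_insert_iff, Set.mem_singleton_iff] at this
        simp only [Set.mem_singleton_iff]
        tauto
      · simp only [Set.mem_singleton_iff] at hb'
        subst hb'
        exact (hw ⟨w, h1, h2⟩).elim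
    have hcK : c ∈ compIn G (T \ {a, b}) c :=
      mem_compIn_self ⟨hc, by simp [hca.ne, hcb.ne]⟩
    have h1 : (compIn G (T \ {a, c}) p).ncard ≤ (compIn G (T \ {a, b}) c).ncard - 1 := by
      have := Set.ncard_le_ncard hEK (Set.toFinite _)
      rwa [Set.ncard_diff_singleton_of_mem hcK] at this
    have h2 := hmin a c p ha hc hp hca.symm hpa hcp.symm
    have h3 : 0 < (compIn G (T \ {a, b}) c).ncard :=
      (Set.ncard_pos (Set.toFinite _)).mpr ⟨c, hcK⟩
    omega

/-- the descent case: `q ∉ {a,b}` and no vertex of `W` is adjacent to `p`. -/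
theorem case_desc [Fintype V] {G : SimpleGraph V} {T : Set V} {a b c p q : V}
    (hmin : ∀ a' b' c', a' ∈ T → b' ∈ T → c' ∈ T → G.Adj a' b' → G.Adj c' a' → G.Adj c' b' →
      (compIn G (T \ {a, b}) c).ncard ≤ (compIn G (T \ {a', b'}) c').ncard)
    (ha : a ∈ T) (hb : b ∈ T) (hc : c ∈ T)
    (hab : G.Adj a b) (hca : G.Adj c a) (hcb : G.Adj c b)
    (hp : p ∈ T) (hcp : G.Adj c p) (hpa0 : p ≠ a) (hpb0 : p ≠ b)
    (hq : q ∈ T) (hqc : G.Adj q c) (hqp : G.Adj q p) (hqa : q ≠ a) (hqb : q ≠ b)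
    (hWp : ¬∃ w ∈ compIn G (T \ {c, p, q}) a, G.Adj w p) : False := by
  classical
  set W : Set V := compIn G (T \ {c, p, q}) a with hW
  have haW : a ∈ T \ {c, p, q} := ⟨ha, by simp [hca.ne', hpa0.symm, hqa.symm]⟩
  have hbW : b ∈ W := compIn_closed (mem_compIn_self haW) hab
    ⟨hb, by simp [hcb.ne', hpb0.symm, hqb.symm]⟩
  have haW' : a ∈ W := mem_compIn_self haW
  have hpW : p ∉ W := fun h => (compIn_subset h).2 (by simp)
  have hpmem : p ∈ (T \ {c, q}) \ W := ⟨⟨hp, by simp [hcp.ne', hqp.ne']⟩, hpW⟩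
  have hEK : compIn G (T \ {c, q}) p ⊆ compIn G (T \ {a, b}) c \ {c} := by
    intro z hz
    have hz' : RIn G (T \ {c, q}) p z := hz
    rcases hz'.avoid (B := W) hpmem with h1 | ⟨w, b', h1, h2, hb', hb's⟩
    · have hz2 : RIn G (T \ {a, b}) p z := by
        refine h1.mono ?_
        rintro t ⟨⟨ht, ht2⟩, ht3⟩
        refine ⟨ht, ?_⟩
        simp only [Set.mem_insert_iff, Set.mem_singleton_iff]
        rintro (rfl | rfl)
        · exact ht3 haW'
        · exact ht3 hbW
      refine ⟨RIn.head ⟨hc, by simp [hca.ne, hcb.ne]⟩ hcp hz2, ?_⟩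
      have := h1.mem_right
      simp only [Set.mem_diff, Set.mem_insert_iff, Set.mem_singleton_iff] at this
      simp only [Set.mem_singleton_iff]
      tauto
    · exfalso
      by_cases hwp : w = p
      · exact hWp ⟨b', hb', (hwp ▸ h2).symm⟩
      · have hwmem : w ∈ T \ {c, p, q} := by
          have h3 := h1.mem_right
          simp only [Set.mem_diff, Set.mem_insert_iff, Set.mem_singleton_iff] at h3 ⊢
          push_neg at h3 ⊢
          exact ⟨h3.1.1, h3.1.2.1, hwp, h3.1.2.2⟩
        exact h1.mem_right.2 (compIn_closed hb' h2.symm hwmem)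
  have hcK : c ∈ compIn G (T \ {a, b}) c :=
    mem_compIn_self ⟨hc, by simp [hca.ne, hcb.ne]⟩
  have h1 : (compIn G (T \ {c, q}) p).ncard ≤ (compIn G (T \ {a, b}) c).ncard - 1 := by
    have := Set.ncard_le_ncard hEK (Set.toFinite _)
    rwa [Set.ncard_diff_singleton_of_mem hcK] at this
  have h2 := hmin c q p hc hq hp hqc.symm hcp.symm hqp.symm
  have h3 : 0 < (compIn G (T \ {a, b}) c).ncard :=
    (Set.ncard_pos (Set.toFinite _)).mpr ⟨c, hcK⟩
  omega

theorem L1_terminal {G : SimpleGraph V} {T : Set V} (hTne : T.Nonempty)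
    (hdeg : ∀ w ∈ T, 3 ≤ (T ∩ {z | G.Adj w z}).ncard)
    (htri : ∀ x y, x ∈ T → y ∈ T → G.Adj x y → ∃ z ∈ T, G.Adj z x ∧ G.Adj z y) :
    FourSets G T := by
  classical
  -- an edge exists
  obtain ⟨w₀, hw₀⟩ := hTne
  have h3 := hdeg w₀ hw₀
  have hedge : ∃ x ∈ T, G.Adj w₀ x := by
    obtain ⟨x, hx⟩ := Set.nonempty_of_ncard_ne_zero
      (s := T ∩ {z | G.Adj w₀ z}) (by omega)
    exact ⟨x, hx.1, hx.2⟩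
  obtain ⟨x₁, hx₁, hadj₁⟩ := hedge
  obtain ⟨z₁, hz₁, hz₁a, hz₁b⟩ := htri w₀ x₁ hw₀ hx₁ hadj₁
  -- minimize over configurations
  set Q : Set ℕ := {n | ∃ a b c, (a ∈ T ∧ b ∈ T ∧ c ∈ T ∧
    G.Adj a b ∧ G.Adj c a ∧ G.Adj c b) ∧ (compIn G (T \ {a, b}) c).ncard = n} with hQdef
  have hQne : Q.Nonempty := ⟨_, w₀, x₁, z₁, ⟨hw₀, hx₁, hz₁, hadj₁, hz₁a, hz₁b⟩, rfl⟩
  obtain ⟨a, b, c, ⟨ha, hb, hc, hab, hca, hcb⟩, hN⟩ := Nat.sInf_mem hQne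
  have hmin : ∀ a' b' c', a' ∈ T → b' ∈ T → c' ∈ T →
      G.Adj a' b' → G.Adj c' a' → G.Adj c' b' →
      (compIn G (T \ {a, b}) c).ncard ≤ (compIn G (T \ {a', b'}) c').ncard := by
    intro a' b' c' h1 h2 h3 h4 h5 h6
    rw [hN]
    exact Nat.sInf_le ⟨a', b', c', ⟨h1, h2, h3, h4, h5, h6⟩, rfl⟩
  clear hN
  -- a vertex p adjacent to c, p ∉ {a,b}
  have hp3 := hdeg c hc
  have hpex : ∃ p, p ∈ T ∧ G.Adj c p ∧ p ≠ a ∧ p ≠ b := by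
    have hle : (T ∩ {z | G.Adj c z}).ncard ≤ ((T ∩ {z | G.Adj c z}) \ {a, b}).ncard +
        ({a, b} : Set V).ncard := Set.ncard_le_ncard_diff_add_ncard _ _ (Set.toFinite _)
    have hab2 : ({a, b} : Set V).ncard ≤ 2 := by
      rw [Set.ncard_pair hab.ne]
    have h1 : 1 ≤ ((T ∩ {z | G.Adj c z}) \ {a, b}).ncard := by omega
    obtain ⟨p, hp⟩ := Set.nonempty_of_ncard_ne_zero
      (s := (T ∩ {z | G.Adj c z}) \ {a, b}) (by omega)
    simp only [Set.mem_diff, Set.mem_inter_iff, Set.mem_setOf_eq, Set.mem_insert_iff,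
      Set.mem_singleton_iff] at hp
    push_neg at hp
    exact ⟨p, hp.1.1, hp.1.2, hp.2.1, hp.2.2⟩
  obtain ⟨p, hp, hcp, hpa0, hpb0⟩ := hpex
  -- common neighbour q of edge c–p
  obtain ⟨q, hq, hqc, hqp⟩ := htri c p hc hp hcp
  by_cases hqa : q = a
  · exact case_qa hmin ha hb hc hab hca hcb hp hcp hpa0 hpb0 (hqa ▸ hqp).symm
  by_cases hqb : q = b
  · -- swap the roles of a and b
    have hmin' : ∀ a' b' c', a' ∈ T → b' ∈ T → c' ∈ T →
        G.Adj a' b' → G.Adj c' a' → G.Adj c' b' →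
        (compIn G (T \ {b, a}) c).ncard ≤ (compIn G (T \ {a', b'}) c').ncard := by
      rw [Set.pair_comm b a]
      exact hmin
    exact case_qa hmin' hb ha hc hab.symm hcb hca hp hcp hpb0 hpa0 (hqb ▸ hqp).symm
  -- q ∉ {a, b}
  by_cases hWp : ∃ w ∈ compIn G (T \ {c, p, q}) a, G.Adj w p
  · by_cases hWq : ∃ w ∈ compIn G (T \ {c, p, q}) a, G.Adj w q
    · -- four sets: {c}, {p}, {q}, W
      have haW : a ∈ T \ {c, p, q} := by
        refine ⟨ha, ?_⟩
        simp only [Set.mem_insert_iff, Set.mem_singleton_iff]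
        push_neg
        exact ⟨hca.ne', hpa0.symm, fun h => hqa h.symm⟩
      set W : Set V := compIn G (T \ {c, p, q}) a with hW
      have hWsub : ∀ z ∈ W, z ∈ T \ {c, p, q} := fun z hz => compIn_subset hz
      obtain ⟨w1, hw1, hw1p⟩ := hWp
      obtain ⟨w2, hw2, hw2q⟩ := hWq
      have hdW : ∀ t : V, t ∈ ({c, p, q} : Set V) → Disjoint ({t} : Set V) W := by
        intro t htm
        refine Set.disjoint_left.mpr ?_
        rintro s rfl hs
        exact (hWsub s hs).2 htm
      refine foursets_of ![{c}, {p}, {q}, W] ?_ ?_ ?_ ?_ ?_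
      · intro i
        fin_cases i
        · exact Set.singleton_subset_iff.mpr hc
        · exact Set.singleton_subset_iff.mpr hp
        · exact Set.singleton_subset_iff.mpr hq
        · exact fun z hz => (hWsub z hz).1
      · intro i
        fin_cases i
        · exact Set.singleton_nonempty _
        · exact Set.singleton_nonempty _
        · exact Set.singleton_nonempty _
        · exact ⟨a, mem_compIn_self haW⟩
      · intro i
        fin_cases i
        · exact connected_induce_singleton
        · exact connected_induce_singleton
        · exact connected_induce_singleton
        · exact connected_induce_compIn haW
      · intro i j hij
        fin_cases i <;> fin_cases j <;>
          first
          | exact absurd hij (by decide)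
          | exact Set.disjoint_singleton.mpr hcp.ne
          | exact Set.disjoint_singleton.mpr hqc.ne'
          | exact Set.disjoint_singleton.mpr hqp.ne'
          | exact hdW c (by simp)
          | exact hdW p (by simp)
          | exact hdW q (by simp)
      · intro i j hij
        fin_cases i <;> fin_cases j <;>
          first
          | exact absurd hij (by decide)
          | exact ⟨c, rfl, p, rfl, hcp⟩
          | exact ⟨c, rfl, q, rfl, hqc.symm⟩
          | exact ⟨c, rfl, a, mem_compIn_self haW, hca⟩
          | exact ⟨p, rfl, q, rfl, hqp.symm⟩
          | exact ⟨p, rfl, w1, hw1, hw1p.symm⟩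
          | exact ⟨q, rfl, w2, hw2, hw2q.symm⟩
    · -- no W vertex adjacent to q : descent with p and q swapped
      exfalso
      have hins : ({c, q, p} : Set V) = {c, p, q} := by
        ext z; simp only [Set.mem_insert_iff, Set.mem_singleton_iff]; tauto
      refine case_desc hmin ha hb hc hab hca hcb hq hqc.symm hqa hqb hp hcp.symm hqp.symm
        hpa0 hpb0 ?_
      rw [hins]
      exact hWq
  · exfalso
    exact case_desc hmin ha hb hc hab hca hcb hp hcp hpa0 hpb0 hq hqc hqp hqa hqb hWp

/-- Every finite graph in which every vertex of `T` has at least 3 neighbours in `T`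
contains four disjoint connected pairwise adjacent branch sets inside `T`. -/
theorem L1 (n : ℕ) : ∀ (G : SimpleGraph V) (T : Set V), T.ncard ≤ n → T.Nonempty →
    (∀ w ∈ T, 3 ≤ (T ∩ {z | G.Adj w z}).ncard) → FourSets G T := by
  classical
  induction n with
  | zero =>
    intro G T hn hne _
    obtain ⟨t, ht⟩ := hne
    have : 0 < T.ncard := (Set.ncard_pos (Set.toFinite _)).mpr ⟨t, ht⟩
    omega
  | succ n ih =>
    intro G T hn hne hdeg
    by_cases hcon : ∃ x ∈ T, ∃ y ∈ T, G.Adj x y ∧ ¬∃ z ∈ T, G.Adj z x ∧ G.Adj z y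
    · obtain ⟨x, hxT, y, hyT, hxy, hnoz⟩ := hcon
      -- contract x into y
      have hyx : y ≠ x := hxy.ne'
      have hT2ne : (T \ {x}).Nonempty := ⟨y, hyT, hyx⟩
      have hT2n : (T \ {x}).ncard ≤ n := by
        have := Set.ncard_diff_singleton_of_mem hxT
        have h0 : 0 < T.ncard := (Set.ncard_pos (Set.toFinite _)).mpr ⟨x, hxT⟩
        omega
      refine foursets_contract hxy hxT (ih (contract G x y) (T \ {x}) hT2n hT2ne ?_)
      intro w hw
      obtain ⟨hwT, hwx⟩ := hw
      simp only [Set.mem_singleton_iff] at hwx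
      by_cases hwy : w = y
      · -- merged vertex
        have hsub : ((T ∩ {z | G.Adj w z}) \ {x}) ∪ ((T ∩ {z | G.Adj x z}) \ {x, w}) ⊆
            (T \ {x}) ∩ {z | (contract G x y).Adj w z} := by
          rintro z (⟨⟨hzT, hzadj⟩, hzx⟩ | ⟨⟨hzT, hzadj⟩, hzxw⟩)
          · simp only [Set.mem_singleton_iff] at hzx
            exact ⟨⟨hzT, hzx⟩, (hzadj : G.Adj w z).ne, hwx, hzx, Or.inl hzadj⟩
          · simp only [Set.mem_insert_iff, Set.mem_singleton_iff] at hzxw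
            push_neg at hzxw
            exact ⟨⟨hzT, hzxw.1⟩, fun h => hzxw.2 h.symm, hwx, hzxw.1,
              Or.inr (Or.inl ⟨hwy, hzadj⟩)⟩
        have hdisj : Disjoint ((T ∩ {z | G.Adj w z}) \ {x})
            ((T ∩ {z | G.Adj x z}) \ {x, w}) := by
          refine Set.disjoint_left.mpr ?_
          rintro z ⟨⟨hzT, hz1⟩, -⟩ ⟨⟨-, hz2⟩, -⟩
          exact hnoz ⟨z, hzT, (hz2 : G.Adj x z).symm, hwy ▸ (hz1 : G.Adj w z).symm⟩
        have hc1 : (T ∩ {z | G.Adj w z}).ncard - 1 ≤ ((T ∩ {z | G.Adj w z}) \ {x}).ncard := by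
          have := Set.ncard_diff_singleton_le (T ∩ {z | G.Adj w z}) x
          have h2 := Set.ncard_le_ncard_diff_add_ncard (T ∩ {z | G.Adj w z}) {x}
            (Set.toFinite _)
          have h3 : ({x} : Set V).ncard = 1 := Set.ncard_singleton x
          omega
        have hc2 : (T ∩ {z | G.Adj x z}).ncard - 2 ≤
            ((T ∩ {z | G.Adj x z}) \ {x, w}).ncard := by
          have h2 := Set.ncard_le_ncard_diff_add_ncard (T ∩ {z | G.Adj x z}) {x, w}
            (Set.toFinite _)
          have h3 : ({x, w} : Set V).ncard ≤ 2 := by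
            rw [Set.ncard_pair (fun h => hwx h.symm)]
          omega
        have hun := Set.ncard_union_eq hdisj (Set.toFinite _) (Set.toFinite _)
        have hle := Set.ncard_le_ncard hsub (Set.toFinite _)
        have hd1 := hdeg w hwT
        have hd2 := hdeg x hxT
        omega
      · -- untouched vertex
        by_cases hwxadj : G.Adj w x
        · -- x was a neighbour; y was not, and becomes one
          have hwy' : ¬ G.Adj w y := fun h => hnoz ⟨w, hwT, hwxadj, h⟩
          have hsub : insert y ((T ∩ {z | G.Adj w z}) \ {x}) ⊆
              (T \ {x}) ∩ {z | (contract G x y).Adj w z} := by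
            rintro z (rfl | ⟨⟨hzT, hzadj⟩, hzx⟩)
            · exact ⟨⟨hyT, hyx⟩, hwy, hwx, hyx, Or.inr (Or.inr ⟨rfl, hwxadj.symm⟩)⟩
            · simp only [Set.mem_singleton_iff] at hzx
              exact ⟨⟨hzT, hzx⟩, (hzadj : G.Adj w z).ne, hwx, hzx, Or.inl hzadj⟩
          have hyni : y ∉ (T ∩ {z | G.Adj w z}) \ {x} := fun h => hwy' h.1.2
          have hc1 : (T ∩ {z | G.Adj w z}).ncard - 1 ≤
              ((T ∩ {z | G.Adj w z}) \ {x}).ncard := by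
            have h2 := Set.ncard_le_ncard_diff_add_ncard (T ∩ {z | G.Adj w z}) {x}
              (Set.toFinite _)
            have h3 : ({x} : Set V).ncard = 1 := Set.ncard_singleton x
            omega
          have hins := Set.ncard_insert_of_notMem hyni (Set.toFinite _)
          have hle := Set.ncard_le_ncard hsub (Set.toFinite _)
          have hd1 := hdeg w hwT
          omega
        · -- x was not a neighbour
          have hsub : T ∩ {z | G.Adj w z} ⊆
              (T \ {x}) ∩ {z | (contract G x y).Adj w z} := by
            rintro z ⟨hzT, hzadj⟩
            have hzx : z ≠ x := fun h => hwxadj (h ▸ hzadj)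
            exact ⟨⟨hzT, hzx⟩, (hzadj : G.Adj w z).ne, hwx, hzx, Or.inl hzadj⟩
          have hle := Set.ncard_le_ncard hsub (Set.toFinite _)
          have hd1 := hdeg w hwT
          omega
    · push_neg at hcon
      exact L1_terminal hne hdeg (fun x y hx hy hadj => hcon x hx y hy hadj)
end Terminal

/-! ### K₅ assembly -/

theorem k5_of {G : SimpleGraph V} (s : Fin 5 → Set V)
    (hne : ∀ i, (s i).Nonempty)
    (hconn : ∀ i, (G.induce (s i)).Connected)
    (hdisj : ∀ i j, i < j → Disjoint (s i) (s j))
    (hadj : ∀ i j, i < j → ∃ a ∈ s i, ∃ b ∈ s j, G.Adj a b) :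
    (completeGraph (Fin 5)).IsMinor G := by
  refine ⟨s, hne, hconn, fun i j hij => ?_, fun i j hij => ?_⟩
  · rcases lt_or_gt_of_ne hij with h | h
    · exact hdisj i j h
    · exact (hdisj j i h).symm
  · rcases lt_or_gt_of_ne hij with h | h
    · exact hadj i j h
    · obtain ⟨a, ha, b, hb, hab⟩ := hadj j i h
      exact ⟨b, hb, a, ha, hab.symm⟩

theorem k5_of_foursets {G : SimpleGraph V} {T : Set V} {u v : V}
    (hF : FourSets G T) (huv : G.Adj u v) (huT : u ∉ T) (hvT : v ∉ T)
    (hTadj : ∀ a ∈ T, G.Adj u a ∨ G.Adj v a) :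
    (completeGraph (Fin 5)).IsMinor G := by
  obtain ⟨f, hT, hne, hconn, hdisj, hadj⟩ := hF
  have hfa : ∀ (i : Fin 4), ∃ a ∈ f i, G.Adj u a ∨ G.Adj v a := by
    intro i
    obtain ⟨a, ha⟩ := hne i
    exact ⟨a, ha, hTadj a (hT i ha)⟩
  have hduv : ∀ (i : Fin 4), Disjoint (f i) ({u, v} : Set V) := by
    intro i
    refine Set.disjoint_right.mpr ?_
    rintro a (rfl | rfl) hmem
    · exact huT (hT i hmem)
    · exact hvT (hT i hmem)
  have hauv : ∀ (i : Fin 4), ∃ a ∈ f i, ∃ b ∈ ({u, v} : Set V), G.Adj a b := by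
    intro i
    obtain ⟨a, ha, hor⟩ := hfa i
    rcases hor with h | h
    · exact ⟨a, ha, u, Set.mem_insert _ _, h.symm⟩
    · exact ⟨a, ha, v, Set.mem_insert_of_mem _ rfl, h.symm⟩
  refine k5_of ![f 0, f 1, f 2, f 3, {u, v}] ?_ ?_ ?_ ?_
  · intro i
    fin_cases i
    · exact hne 0
    · exact hne 1
    · exact hne 2
    · exact hne 3
    · exact ⟨u, Set.mem_insert _ _⟩
  · intro i
    fin_cases i
    · exact hconn 0
    · exact hconn 1
    · exact hconn 2
    · exact hconn 3
    · exact connected_induce_pair huv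
  · intro i j hij
    fin_cases i <;> fin_cases j <;>
      first
      | exact absurd hij (by decide)
      | exact hdisj (show (0 : Fin 4) ≠ 1 by decide)
      | exact hdisj (show (0 : Fin 4) ≠ 2 by decide)
      | exact hdisj (show (0 : Fin 4) ≠ 3 by decide)
      | exact hdisj (show (1 : Fin 4) ≠ 2 by decide)
      | exact hdisj (show (1 : Fin 4) ≠ 3 by decide)
      | exact hdisj (show (2 : Fin 4) ≠ 3 by decide)
      | exact hduv 0
      | exact hduv 1
      | exact hduv 2
      | exact hduv 3
  · intro i j hij
    fin_cases i <;> fin_cases j <;>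
      first
      | exact absurd hij (by decide)
      | exact hadj 0 1 (by decide)
      | exact hadj 0 2 (by decide)
      | exact hadj 0 3 (by decide)
      | exact hadj 1 2 (by decide)
      | exact hadj 1 3 (by decide)
      | exact hadj 2 3 (by decide)
      | exact hauv 0
      | exact hauv 1
      | exact hauv 2
      | exact hauv 3

/-! ### vertex deletion -/

def deleteVert (G : SimpleGraph V) (w : V) : SimpleGraph V where
  Adj a b := G.Adj a b ∧ a ≠ w ∧ b ≠ w
  symm := ⟨fun a b ⟨h1, h2, h3⟩ => ⟨h1.symm, h3, h2⟩⟩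
  loopless := ⟨fun a h => h.1.ne rfl⟩

theorem deleteVert_le {G : SimpleGraph V} {w : V} : deleteVert G w ≤ G :=
  fun _ _ h => h.1

/-! ### paths of length three -/

def pairsSet (G : SimpleGraph V) (u v : V) : Set (V × V) :=
  {p | p.1 ≠ p.2 ∧ p.1 ≠ v ∧ p.2 ≠ u ∧ G.Adj u p.1 ∧ G.Adj p.1 p.2 ∧ G.Adj p.2 v}

def suppSet (G : SimpleGraph V) (u v : V) : Set V :=
  {w | w ≠ u ∧ w ≠ v ∧ ∃ z, G.Adj w z}

theorem pair_mem_supp {G : SimpleGraph V} {u v : V} {p : V × V}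
    (hp : p ∈ pairsSet G u v) : p.1 ∈ suppSet G u v ∧ p.2 ∈ suppSet G u v := by
  obtain ⟨h0, h1, h2, h3, h4, h5⟩ := hp
  exact ⟨⟨h3.ne', h1, p.2, h4⟩, ⟨h2, h5.ne, p.1, h4.symm⟩⟩

/-- the set of paths through `w` -/
def pairsAt (G : SimpleGraph V) (u v w : V) : Set (V × V) :=
  pairsSet G u v ∩ {p | p.1 = w ∨ p.2 = w}

theorem pairsAt_sub {G : SimpleGraph V} {u v : V} (w : V) :
    pairsAt G u v w ⊆ ((fun y => (w, y)) '' {y | G.Adj w y ∧ G.Adj y v ∧ y ≠ u}) ∪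
      ((fun x => (x, w)) '' {x | G.Adj w x ∧ G.Adj u x ∧ x ≠ v}) := by
  rintro ⟨x₀, y₀⟩ ⟨⟨h0, h1, h2, h3, h4, h5⟩, hw⟩
  rcases hw with hw | hw
  · subst hw
    exact Or.inl ⟨y₀, ⟨h4, h5, h2⟩, rfl⟩
  · subst hw
    exact Or.inr ⟨x₀, ⟨h4.symm, h3, h1⟩, rfl⟩

theorem pairsAt_sub_left {G : SimpleGraph V} {u v w : V} (hwv : ¬ G.Adj w v) :
    pairsAt G u v w ⊆ ((fun y => (w, y)) '' {y | G.Adj w y ∧ G.Adj y v ∧ y ≠ u}) := by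
  rintro ⟨x₀, y₀⟩ ⟨⟨h0, h1, h2, h3, h4, h5⟩, hw⟩
  rcases hw with hw | hw
  · subst hw
    exact ⟨y₀, ⟨h4, h5, h2⟩, rfl⟩
  · exact absurd (hw ▸ h5) hwv

theorem pairsAt_sub_right {G : SimpleGraph V} {u v w : V} (huw : ¬ G.Adj u w) :
    pairsAt G u v w ⊆ ((fun x => (x, w)) '' {x | G.Adj w x ∧ G.Adj u x ∧ x ≠ v}) := by
  rintro ⟨x₀, y₀⟩ ⟨⟨h0, h1, h2, h3, h4, h5⟩, hw⟩
  rcases hw with hw | hw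
  · exact absurd (hw ▸ h3) huw
  · subst hw
    exact ⟨x₀, ⟨h4.symm, h3, h1⟩, rfl⟩

section Main

variable [Fintype V]

theorem main_bound (m : ℕ) : ∀ (G : SimpleGraph V) (u v : V),
    ¬ (completeGraph (Fin 5)).IsMinor G → G.Adj u v → (suppSet G u v).ncard ≤ m →
    (pairsSet G u v).ncard ≤ 2 * m - 2 := by
  classical
  induction m using Nat.strong_induction_on with
  | _ m ih =>
  intro G u v hG huv hm
  by_cases hPne : pairsSet G u v = ∅
  · rw [hPne]; simp
  obtain ⟨p₀, hp₀⟩ := Set.nonempty_iff_ne_empty.mpr hPne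
  have hm2 : 2 ≤ m := by
    have hsub : ({p₀.1, p₀.2} : Set V) ⊆ suppSet G u v := by
      rintro z (rfl | rfl)
      · exact (pair_mem_supp hp₀).1
      · exact (pair_mem_supp hp₀).2
    have h2 : ({p₀.1, p₀.2} : Set V).ncard = 2 := Set.ncard_pair hp₀.1
    have := Set.ncard_le_ncard hsub (Set.toFinite _)
    omega
  by_cases hsmall : ∃ w ∈ suppSet G u v, (pairsAt G u v w).ncard ≤ 2
  · -- delete w
    obtain ⟨w, hwsupp, hcw⟩ := hsmall
    obtain ⟨hwu, hwv, hedge⟩ := hwsupp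
    have hP2 : pairsSet (deleteVert G w) u v
        = pairsSet G u v \ {p | p.1 = w ∨ p.2 = w} := by
      ext ⟨x₀, y₀⟩
      constructor
      · rintro ⟨h0, h1, h2, h3, h4, h5⟩
        refine ⟨⟨h0, h1, h2, h3.1, h4.1, h5.1⟩, ?_⟩
        simp only [Set.mem_setOf_eq]
        push_neg
        exact ⟨h3.2.2, h5.2.1⟩
      · rintro ⟨⟨h0, h1, h2, h3, h4, h5⟩, hnem⟩
        simp only [Set.mem_setOf_eq] at hnem
        push_neg at hnem
        exact ⟨h0, h1, h2, ⟨h3, Ne.symm hwu, hnem.1⟩, ⟨h4, hnem.1, hnem.2⟩,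
          ⟨h5, hnem.2, Ne.symm hwv⟩⟩
    have hsupp2 : suppSet (deleteVert G w) u v ⊆ suppSet G u v \ {w} := by
      rintro a ⟨ha1, ha2, z, hz⟩
      exact ⟨⟨ha1, ha2, z, hz.1⟩, hz.2.1⟩
    have hwmem : w ∈ suppSet G u v := ⟨hwu, hwv, hedge⟩
    have hnsupp2 : (suppSet (deleteVert G w) u v).ncard ≤ m - 1 := by
      have h1 := Set.ncard_le_ncard hsupp2 (Set.toFinite _)
      have h2 := Set.ncard_diff_singleton_of_mem hwmem
      omega
    have hG2 : ¬ (completeGraph (Fin 5)).IsMinor (deleteVert G w) :=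
      fun h => hG (minor_mono h deleteVert_le)
    have huv2 : (deleteVert G w).Adj u v := ⟨huv, Ne.symm hwu, Ne.symm hwv⟩
    have hIH := ih (m - 1) (by omega) (deleteVert G w) u v hG2 huv2 hnsupp2
    have hsplit := Set.ncard_inter_add_ncard_diff_eq_ncard (pairsSet G u v)
      {p : V × V | p.1 = w ∨ p.2 = w} (Set.toFinite _)
    rw [← hP2] at hsplit
    have hcw' : (pairsSet G u v ∩ {p : V × V | p.1 = w ∨ p.2 = w}).ncard ≤ 2 := hcw
    omega
  push_neg at hsmall
  have hbig : ∀ w ∈ suppSet G u v, 3 ≤ (pairsAt G u v w).ncard := by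
    intro w hw
    have := hsmall w hw
    omega
  have hXY : ∀ w ∈ suppSet G u v, (G.Adj u w ∧ w ≠ v) ∨ (G.Adj w v ∧ w ≠ u) := by
    intro w hw
    by_contra hcon
    push_neg at hcon
    have hempty : pairsAt G u v w = ∅ := by
      ext ⟨x₀, y₀⟩
      simp only [Set.mem_empty_iff_false, iff_false]
      rintro ⟨⟨h0, h1, h2, h3, h4, h5⟩, hor⟩
      rcases hor with hor | hor
      · exact h1 (hor ▸ hcon.1 (hor ▸ h3))
      · exact h2 (hor ▸ hcon.2 (hor ▸ h5))
    have h3 := hbig w hw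
    rw [hempty] at h3
    simp at h3
  by_cases hAA : ∃ w w', (G.Adj u w ∧ G.Adj w v) ∧ (G.Adj u w' ∧ G.Adj w' v) ∧ G.Adj w w'
  · obtain ⟨w, w', ⟨huw, hwv⟩, ⟨huw', hw'v⟩, hww'⟩ := hAA
    have hwu : w ≠ u := huw.ne'
    have hwv0 : w ≠ v := hwv.ne
    have hw'u : w' ≠ u := huw'.ne'
    have hw'v0 : w' ≠ v := hw'v.ne
    have hd2 : ∀ a b c : V, a ≠ b → a ≠ c → Disjoint ({a} : Set V) {b, c} := by
      intro a b c h1 h2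
      refine Set.disjoint_left.mpr ?_
      rintro s rfl (rfl | rfl)
      · exact h1 rfl
      · exact h2 rfl
    by_cases hz : ∃ z, G.Adj z w ∧ G.Adj z w' ∧
        ((G.Adj u z ∧ z ≠ v) ∨ (G.Adj z v ∧ z ≠ u))
    · exfalso
      apply hG
      obtain ⟨z, hzw, hzw', hzz⟩ := hz
      have hzneu : z ≠ v ∨ z ≠ u := by tauto
      by_cases huz : G.Adj u z <;> by_cases hzv : G.Adj z v
      · -- z ∈ A : K₅ on singletons
        refine k5_of ![{u}, {v}, {w}, {w'}, {z}] ?_ ?_ ?_ ?_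
        · intro i; fin_cases i <;> exact Set.singleton_nonempty _
        · intro i; fin_cases i <;> exact connected_induce_singleton
        · intro i j hij
          fin_cases i <;> fin_cases j <;>
            first
            | exact absurd hij (by decide)
            | exact Set.disjoint_singleton.mpr huv.ne
            | exact Set.disjoint_singleton.mpr hwu.symm
            | exact Set.disjoint_singleton.mpr hw'u.symm
            | exact Set.disjoint_singleton.mpr huz.ne
            | exact Set.disjoint_singleton.mpr hwv0.symm
            | exact Set.disjoint_singleton.mpr hw'v0.symm
            | exact Set.disjoint_singleton.mpr hzv.ne'
            | exact Set.disjoint_singleton.mpr hww'.ne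
            | exact Set.disjoint_singleton.mpr hzw.ne'
            | exact Set.disjoint_singleton.mpr hzw'.ne'
        · intro i j hij
          fin_cases i <;> fin_cases j <;>
            first
            | exact absurd hij (by decide)
            | exact ⟨u, rfl, v, rfl, huv⟩
            | exact ⟨u, rfl, w, rfl, huw⟩
            | exact ⟨u, rfl, w', rfl, huw'⟩
            | exact ⟨u, rfl, z, rfl, huz⟩
            | exact ⟨v, rfl, w, rfl, hwv.symm⟩
            | exact ⟨v, rfl, w', rfl, hw'v.symm⟩
            | exact ⟨v, rfl, z, rfl, hzv.symm⟩
            | exact ⟨w, rfl, w', rfl, hww'⟩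
            | exact ⟨w, rfl, z, rfl, hzw.symm⟩
            | exact ⟨w', rfl, z, rfl, hzw'.symm⟩
      · -- z ∈ B_u
        have hz0v : z ≠ v := by
          rcases hzz with ⟨-, h⟩ | ⟨h, -⟩
          · exact h
          · exact absurd h hzv
        have hzsupp : z ∈ suppSet G u v := ⟨huz.ne', hz0v, w, hzw⟩
        have hYz : 3 ≤ ({y | G.Adj z y ∧ G.Adj y v ∧ y ≠ u}).ncard := by
          have hc1 := Set.ncard_le_ncard (pairsAt_sub_left (u := u) hzv) (Set.toFinite _)
          have hc2 := Set.ncard_image_le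
            (s := {y | G.Adj z y ∧ G.Adj y v ∧ y ≠ u}) (f := fun y => (z, y)) (Set.toFinite _)
          have := hbig z hzsupp
          omega
        have hyex : ∃ y, G.Adj z y ∧ G.Adj y v ∧ y ≠ u ∧ y ≠ w ∧ y ≠ w' := by
          have hle := Set.ncard_le_ncard_diff_add_ncard
            {y | G.Adj z y ∧ G.Adj y v ∧ y ≠ u} ({w, w'} : Set V) (Set.toFinite _)
          have h2 : ({w, w'} : Set V).ncard = 2 := Set.ncard_pair hww'.ne
          obtain ⟨y, hy⟩ := Set.nonempty_of_ncard_ne_zero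
            (s := {y | G.Adj z y ∧ G.Adj y v ∧ y ≠ u} \ {w, w'}) (by omega)
          obtain ⟨⟨hy1, hy2, hy3⟩, hy4⟩ := hy
          simp only [Set.mem_insert_iff, Set.mem_singleton_iff] at hy4
          push_neg at hy4
          exact ⟨y, hy1, hy2, hy3, hy4.1, hy4.2⟩
        obtain ⟨y, hzy, hyv, hyu, hyw, hyw'⟩ := hyex
        refine k5_of ![{w}, {w'}, {z}, {u}, {v, y}] ?_ ?_ ?_ ?_
        · intro i; fin_cases i <;>
            first
            | exact Set.singleton_nonempty _
            | exact ⟨v, Set.mem_insert _ _⟩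
        · intro i; fin_cases i <;>
            first
            | exact connected_induce_singleton
            | exact connected_induce_pair (hyv.symm)
        · intro i j hij
          fin_cases i <;> fin_cases j <;>
            first
            | exact absurd hij (by decide)
            | exact Set.disjoint_singleton.mpr hww'.ne
            | exact Set.disjoint_singleton.mpr hzw.ne'
            | exact Set.disjoint_singleton.mpr hzw'.ne'
            | exact Set.disjoint_singleton.mpr hwu
            | exact Set.disjoint_singleton.mpr hw'u
            | exact Set.disjoint_singleton.mpr huz.ne
            | exact Set.disjoint_singleton.mpr huz.ne'
            | exact hd2 w v y hwv0 (Ne.symm hyw)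
            | exact hd2 w' v y hw'v0 (Ne.symm hyw')
            | exact hd2 z v y hz0v hzy.ne
            | exact hd2 u v y huv.ne (Ne.symm hyu)
        · intro i j hij
          fin_cases i <;> fin_cases j <;>
            first
            | exact absurd hij (by decide)
            | exact ⟨w, rfl, w', rfl, hww'⟩
            | exact ⟨w, rfl, z, rfl, hzw.symm⟩
            | exact ⟨w, rfl, u, rfl, huw.symm⟩
            | exact ⟨w, rfl, v, Set.mem_insert _ _, hwv⟩
            | exact ⟨w', rfl, z, rfl, hzw'.symm⟩
            | exact ⟨w', rfl, u, rfl, huw'.symm⟩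
            | exact ⟨w', rfl, v, Set.mem_insert _ _, hw'v⟩
            | exact ⟨z, rfl, u, rfl, huz.symm⟩
            | exact ⟨z, rfl, y, Set.mem_insert_of_mem _ rfl, hzy⟩
            | exact ⟨u, rfl, v, Set.mem_insert _ _, huv⟩
      · -- z ∈ B_v
        have hz0u : z ≠ u := by
          rcases hzz with ⟨h, -⟩ | ⟨-, h⟩
          · exact absurd h huz
          · exact h
        have hzsupp : z ∈ suppSet G u v := ⟨hz0u, hzv.ne, w, hzw⟩
        have hXz : 3 ≤ ({x | G.Adj z x ∧ G.Adj u x ∧ x ≠ v}).ncard := by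
          have hc1 := Set.ncard_le_ncard (pairsAt_sub_right (v := v) huz) (Set.toFinite _)
          have hc2 := Set.ncard_image_le
            (s := {x | G.Adj z x ∧ G.Adj u x ∧ x ≠ v}) (f := fun x => (x, z)) (Set.toFinite _)
          have := hbig z hzsupp
          omega
        have hyex : ∃ x, G.Adj z x ∧ G.Adj u x ∧ x ≠ v ∧ x ≠ w ∧ x ≠ w' := by
          have hle := Set.ncard_le_ncard_diff_add_ncard
            {x | G.Adj z x ∧ G.Adj u x ∧ x ≠ v} ({w, w'} : Set V) (Set.toFinite _)
          have h2 : ({w, w'} : Set V).ncard = 2 := Set.ncard_pair hww'.ne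
          obtain ⟨x, hx⟩ := Set.nonempty_of_ncard_ne_zero
            (s := {x | G.Adj z x ∧ G.Adj u x ∧ x ≠ v} \ {w, w'}) (by omega)
          obtain ⟨⟨hx1, hx2, hx3⟩, hx4⟩ := hx
          simp only [Set.mem_insert_iff, Set.mem_singleton_iff] at hx4
          push_neg at hx4
          exact ⟨x, hx1, hx2, hx3, hx4.1, hx4.2⟩
        obtain ⟨x, hzx, hux, hxv, hxw, hxw'⟩ := hyex
        refine k5_of ![{w}, {w'}, {z}, {v}, {u, x}] ?_ ?_ ?_ ?_
        · intro i; fin_cases i <;>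
            first
            | exact Set.singleton_nonempty _
            | exact ⟨u, Set.mem_insert _ _⟩
        · intro i; fin_cases i <;>
            first
            | exact connected_induce_singleton
            | exact connected_induce_pair hux
        · intro i j hij
          fin_cases i <;> fin_cases j <;>
            first
            | exact absurd hij (by decide)
            | exact Set.disjoint_singleton.mpr hww'.ne
            | exact Set.disjoint_singleton.mpr hzw.ne'
            | exact Set.disjoint_singleton.mpr hzw'.ne'
            | exact Set.disjoint_singleton.mpr hwv0
            | exact Set.disjoint_singleton.mpr hw'v0
            | exact Set.disjoint_singleton.mpr hzv.ne
            | exact hd2 w u x huw.ne' (Ne.symm hxw)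
            | exact hd2 w' u x huw'.ne' (Ne.symm hxw')
            | exact hd2 z u x hz0u hzx.ne
            | exact hd2 v u x (Ne.symm huv.ne) (Ne.symm hxv)
        · intro i j hij
          fin_cases i <;> fin_cases j <;>
            first
            | exact absurd hij (by decide)
            | exact ⟨w, rfl, w', rfl, hww'⟩
            | exact ⟨w, rfl, z, rfl, hzw.symm⟩
            | exact ⟨w, rfl, v, rfl, hwv⟩
            | exact ⟨w, rfl, u, Set.mem_insert _ _, huw.symm⟩
            | exact ⟨w', rfl, z, rfl, hzw'.symm⟩
            | exact ⟨w', rfl, v, rfl, hw'v⟩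
            | exact ⟨w', rfl, u, Set.mem_insert _ _, huw'.symm⟩
            | exact ⟨z, rfl, v, rfl, hzv⟩
            | exact ⟨z, rfl, x, Set.mem_insert_of_mem _ rfl, hzx⟩
            | exact ⟨v, rfl, u, Set.mem_insert _ _, huv.symm⟩
      · -- neither: contradiction with hzz
        rcases hzz with ⟨h, -⟩ | ⟨h, -⟩
        · exact absurd h huz
        · exact absurd h hzv
    · -- contract w into w'
      set G₂ := contract G w w' with hG₂def
      have hG2 : ¬ (completeGraph (Fin 5)).IsMinor G₂ := by
        intro h
        apply hG
        refine contract_minor hww' ?_ h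
        intro i
        by_cases hi : i = 0
        · subst hi
          exact ⟨1, show (0 : Fin 5) ≠ 1 by decide⟩
        · exact ⟨0, show i ≠ 0 from hi⟩
      have huv2 : G₂.Adj u v := ⟨huv.ne, Ne.symm hwu, Ne.symm hwv0, Or.inl huv⟩
      have hsupp2 : suppSet G₂ u v ⊆ suppSet G u v \ {w} := by
        rintro a ⟨ha1, ha2, z, hz2⟩
        obtain ⟨hne', haw, hzw0, hor⟩ := hz2
        refine ⟨⟨ha1, ha2, ?_⟩, haw⟩
        rcases hor with h | ⟨haw', h⟩ | ⟨hzw', h⟩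
        · exact ⟨z, h⟩
        · exact ⟨w, (haw' ▸ hww'.symm : G.Adj a w)⟩
        · exact ⟨w, h.symm⟩
      have hwsup : w ∈ suppSet G u v := ⟨hwu, hwv0, w', hww'⟩
      have hnsupp2 : (suppSet G₂ u v).ncard ≤ m - 1 := by
        have h1 := Set.ncard_le_ncard hsupp2 (Set.toFinite _)
        have h2 := Set.ncard_diff_singleton_of_mem hwsup
        omega
      have hpww' : (w, w') ∈ pairsSet G u v := ⟨hww'.ne, hwv0, hw'u, huw, hww', hw'v⟩
      have hpw'w : (w', w) ∈ pairsSet G u v :=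
        ⟨hww'.ne', hw'v0, hwu, huw', hww'.symm, hwv⟩
      set S2 : Set (V × V) := {(w, w'), (w', w)} with hS2
      have hS2sub : S2 ⊆ pairsSet G u v := by
        rintro p (rfl | rfl)
        · exact hpww'
        · exact hpw'w
      have hS2card : S2.ncard = 2 := by
        refine Set.ncard_pair ?_
        intro h
        exact hww'.ne (congrArg Prod.fst h)
      set σ : V → V := fun t => if t = w then w' else t with hσ
      have hσw : σ w = w' := if_pos rfl
      have hσid : ∀ t, t ≠ w → σ t = t := fun t ht => if_neg ht
      have hσcase : ∀ a b, σ a = σ b → a = b ∨ (a = w ∧ b = w') ∨ (a = w' ∧ b = w) := by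
        intro a b h
        by_cases ha : a = w <;> by_cases hb : b = w
        · exact Or.inl (ha.trans hb.symm)
        · subst ha
          rw [hσw, hσid b hb] at h
          exact Or.inr (Or.inl ⟨rfl, h.symm⟩)
        · subst hb
          rw [hσw, hσid a ha] at h
          exact Or.inr (Or.inr ⟨h, rfl⟩)
        · rw [hσid a ha, hσid b hb] at h
          exact Or.inl h
      have hmaps : ∀ p ∈ pairsSet G u v \ S2, (σ p.1, σ p.2) ∈ pairsSet G₂ u v := by
        rintro ⟨x₀, y₀⟩ ⟨⟨h0, h1, h2, h3, h4, h5⟩, hpS⟩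
        have hxyne : ¬(x₀ = w ∧ y₀ = w') := by
          rintro ⟨rfl, rfl⟩
          exact hpS (Set.mem_insert _ _)
        have hyxne : ¬(x₀ = w' ∧ y₀ = w) := by
          rintro ⟨rfl, rfl⟩
          exact hpS (Set.mem_insert_of_mem _ rfl)
        by_cases hx : x₀ = w
        · have hy' : y₀ ≠ w' := fun h => hxyne ⟨hx, h⟩
          have hyw : y₀ ≠ w := fun h => h0 (hx.trans h.symm)
          have hσx : σ x₀ = w' := by rw [hx]; exact hσw
          rw [hσx, hσid y₀ hyw]
          refine ⟨fun h => hy' h.symm, hw'v0, h2, ?_, ?_, ?_⟩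
          · exact ⟨Ne.symm hw'u, Ne.symm hwu, hww'.ne', Or.inl huw'⟩
          · exact ⟨fun h => hy' h.symm, hww'.ne', hyw, Or.inr (Or.inl ⟨rfl, hx ▸ h4⟩)⟩
          · exact ⟨h5.ne, hyw, Ne.symm hwv0, Or.inl h5⟩
        · by_cases hy : y₀ = w
          · have hx' : x₀ ≠ w' := fun h => hyxne ⟨h, hy⟩
            have hσy : σ y₀ = w' := by rw [hy]; exact hσw
            rw [hσid x₀ hx, hσy]
            refine ⟨hx', h1, hw'u, ?_, ?_, ?_⟩
            · exact ⟨h3.ne, Ne.symm hwu, hx, Or.inl h3⟩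
            · exact ⟨hx', hx, hww'.ne', Or.inr (Or.inr ⟨rfl, (hy ▸ h4).symm⟩)⟩
            · exact ⟨hw'v.ne, hww'.ne', Ne.symm hwv0, Or.inl hw'v⟩
          · rw [hσid x₀ hx, hσid y₀ hy]
            refine ⟨h0, h1, h2, ?_, ?_, ?_⟩
            · exact ⟨h3.ne, Ne.symm hwu, hx, Or.inl h3⟩
            · exact ⟨h0, hx, hy, Or.inl h4⟩
            · exact ⟨h5.ne, hy, Ne.symm hwv0, Or.inl h5⟩
      have hinj : Set.InjOn (fun p : V × V => (σ p.1, σ p.2)) (pairsSet G u v \ S2) := by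
        rintro ⟨x₁, y₁⟩ ⟨hp, hpS⟩ ⟨x₂, y₂⟩ ⟨hq, hqS⟩ heq
        simp only [Prod.mk.injEq] at heq ⊢
        obtain ⟨he1, he2⟩ := heq
        obtain ⟨hp0, hp1, hp2, hp3, hp4, hp5⟩ := hp
        obtain ⟨hq0, hq1, hq2, hq3, hq4, hq5⟩ := hq
        have hp0' : x₁ ≠ y₁ := hp0
        have hp1' : x₁ ≠ v := hp1
        have hp2' : y₁ ≠ u := hp2
        have hp3' : G.Adj u x₁ := hp3
        have hp4' : G.Adj x₁ y₁ := hp4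
        have hp5' : G.Adj y₁ v := hp5
        have hq4' : G.Adj x₂ y₂ := hq4
        rcases hσcase _ _ he1 with h1 | ⟨ha1, hb1⟩ | ⟨ha1, hb1⟩ <;>
          rcases hσcase _ _ he2 with h2 | ⟨ha2, hb2⟩ | ⟨ha2, hb2⟩
        · exact ⟨h1, h2⟩
        · exfalso
          refine hz ⟨x₁, ?_, ?_, Or.inl ⟨hp3', hp1'⟩⟩
          · rw [← ha2]; exact hp4'
          · rw [← hb2, h1]; exact hq4'
        · exfalso
          refine hz ⟨x₁, ?_, ?_, Or.inl ⟨hp3', hp1'⟩⟩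
          · rw [← hb2, h1]; exact hq4'
          · rw [← ha2]; exact hp4'
        · exfalso
          refine hz ⟨y₁, ?_, ?_, Or.inr ⟨hp5', hp2'⟩⟩
          · rw [← ha1]; exact hp4'.symm
          · rw [← hb1, h2]; exact hq4'.symm
        · exact absurd (ha1.trans ha2.symm) hp0'
        · exact absurd (show ((x₁, y₁) : V × V) ∈ S2 by
            rw [ha1, ha2]; exact Set.mem_insert _ _) hpS
        · exfalso
          refine hz ⟨y₁, ?_, ?_, Or.inr ⟨hp5', hp2'⟩⟩
          · rw [← hb1, h2]; exact hq4'.symm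
          · rw [← ha1]; exact hp4'.symm
        · exact absurd (show ((x₁, y₁) : V × V) ∈ S2 by
            rw [ha1, ha2]; exact Set.mem_insert_of_mem _ rfl) hpS
        · exact absurd (ha1.trans ha2.symm) hp0'
      have himg := Set.ncard_image_of_injOn hinj
      have hsubP2 : (fun p : V × V => (σ p.1, σ p.2)) '' (pairsSet G u v \ S2)
          ⊆ pairsSet G₂ u v := by
        rintro q ⟨p, hp, rfl⟩
        exact hmaps p hp
      have hle2 := Set.ncard_le_ncard hsubP2 (Set.toFinite _)
      have hdiff := Set.ncard_diff hS2sub (Set.toFinite _)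
      have ht2 : 2 ≤ (pairsSet G u v).ncard := by
        have := Set.ncard_le_ncard hS2sub (Set.toFinite _)
        omega
      have hIH := ih (m - 1) (by omega) G₂ u v hG2 huv2 hnsupp2
      omega
  · -- no A–A edge : use L1
    exfalso
    apply hG
    have hTne : suppSet G u v |>.Nonempty := ⟨p₀.1, (pair_mem_supp hp₀).1⟩
    have hdeg : ∀ w ∈ suppSet G u v, 3 ≤ ((suppSet G u v) ∩ {z | G.Adj w z}).ncard := by
      intro w hw
      have hYsub : {y | G.Adj w y ∧ G.Adj y v ∧ y ≠ u} ⊆ (suppSet G u v) ∩ {z | G.Adj w z} := by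
        rintro y ⟨hy1, hy2, hy3⟩
        exact ⟨⟨hy3, hy2.ne, w, hy1.symm⟩, hy1⟩
      have hXsub : {x | G.Adj w x ∧ G.Adj u x ∧ x ≠ v} ⊆ (suppSet G u v) ∩ {z | G.Adj w z} := by
        rintro x ⟨hx1, hx2, hx3⟩
        exact ⟨⟨hx2.ne', hx3, w, hx1.symm⟩, hx1⟩
      by_cases huw : G.Adj u w <;> by_cases hwv : G.Adj w v
      · -- w ∈ A
        have hdisjXY : Disjoint {y | G.Adj w y ∧ G.Adj y v ∧ y ≠ u}
            {x | G.Adj w x ∧ G.Adj u x ∧ x ≠ v} := by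
          refine Set.disjoint_left.mpr ?_
          rintro z ⟨hz1, hz2, hz3⟩ ⟨hz4, hz5, hz6⟩
          exact hAA ⟨w, z, ⟨huw, hwv⟩, ⟨hz5, hz2⟩, hz1⟩
        have hun := Set.ncard_union_eq hdisjXY (Set.toFinite _) (Set.toFinite _)
        have husub := Set.ncard_le_ncard
          (Set.union_subset hYsub hXsub) (Set.toFinite _)
        have hc1 := Set.ncard_le_ncard (pairsAt_sub (G := G) (u := u) (v := v) w)
          (Set.toFinite _)
        have hc2 := Set.ncard_union_le
          ((fun y => (w, y)) '' {y | G.Adj w y ∧ G.Adj y v ∧ y ≠ u})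
          ((fun x => (x, w)) '' {x | G.Adj w x ∧ G.Adj u x ∧ x ≠ v})
        have hc3 := Set.ncard_image_le
          (s := {y | G.Adj w y ∧ G.Adj y v ∧ y ≠ u}) (f := fun y => (w, y)) (Set.toFinite _)
        have hc4 := Set.ncard_image_le
          (s := {x | G.Adj w x ∧ G.Adj u x ∧ x ≠ v}) (f := fun x => (x, w)) (Set.toFinite _)
        have := hbig w hw
        omega
      · -- w ∈ B_u
        have hc1 := Set.ncard_le_ncard (pairsAt_sub_left (u := u) hwv) (Set.toFinite _)
        have hc3 := Set.ncard_image_le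
          (s := {y | G.Adj w y ∧ G.Adj y v ∧ y ≠ u}) (f := fun y => (w, y)) (Set.toFinite _)
        have hYle := Set.ncard_le_ncard hYsub (Set.toFinite _)
        have := hbig w hw
        omega
      · -- w ∈ B_v
        have hc1 := Set.ncard_le_ncard (pairsAt_sub_right (v := v) huw) (Set.toFinite _)
        have hc4 := Set.ncard_image_le
          (s := {x | G.Adj w x ∧ G.Adj u x ∧ x ≠ v}) (f := fun x => (x, w)) (Set.toFinite _)
        have hXle := Set.ncard_le_ncard hXsub (Set.toFinite _)
        have := hbig w hw
        omega
      · rcases hXY w hw with ⟨h, -⟩ | ⟨h, -⟩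
        · exact absurd h huw
        · exact absurd h hwv
    have hF := L1 ((suppSet G u v).ncard) G (suppSet G u v) le_rfl hTne hdeg
    refine k5_of_foursets hF huv (fun h => h.1 rfl) (fun h => h.2.1 rfl) ?_
    intro a ha
    rcases hXY a ha with ⟨h, -⟩ | ⟨h, -⟩
    · exact Or.inl h
    · exact Or.inr h.symm

end Main

end PlanarPaths

/-- If `G` is a planar graph on `k ≥ 3` vertices and `{u, v}` is an edge of `G`, then the
number of paths of length three from `u` to `v` (4 distinct vertices `u, x, y, v` with
`{u,x}`, `{x,y}`, `{y,v}` edges; each such path is determined by the ordered pair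
`(x, y)` of internal vertices) is at most `2(k − 3)`. -/
theorem paths_of_length_three_le {V : Type*} [Fintype V] (G : SimpleGraph V)
    (k : ℕ) (hk : 3 ≤ k) (hcard : Fintype.card V = k)
    (hG : G.IsPlanar) (u v : V) (huv : G.Adj u v) :
    {p : V × V | p.1 ≠ p.2 ∧ p.1 ≠ v ∧ p.2 ≠ u ∧
      G.Adj u p.1 ∧ G.Adj p.1 p.2 ∧ G.Adj p.2 v}.ncard ≤ 2 * (k - 3) := by

  classical
  have hmain := PlanarPaths.main_bound ((PlanarPaths.suppSet G u v).ncard) G u v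
    hG.1 huv le_rfl
  have hdis : Disjoint ({u, v} : Set V) (PlanarPaths.suppSet G u v) := by
    refine Set.disjoint_right.mpr ?_
    rintro a ⟨ha1, ha2, -⟩
    rintro (rfl | rfl)
    · exact ha1 rfl
    · exact ha2 rfl
  have hun := Set.ncard_union_eq hdis (Set.toFinite _) (Set.toFinite _)
  have hle := Set.ncard_le_ncard
    (Set.subset_univ (({u, v} : Set V) ∪ PlanarPaths.suppSet G u v)) (Set.toFinite _)
  rw [Set.ncard_univ, Nat.card_eq_fintype_card, hcard] at hle
  have hp2 : ({u, v} : Set V).ncard = 2 := Set.ncard_pair huv.ne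
  have hgoal : {p : V × V | p.1 ≠ p.2 ∧ p.1 ≠ v ∧ p.2 ≠ u ∧
      G.Adj u p.1 ∧ G.Adj p.1 p.2 ∧ G.Adj p.2 v} = PlanarPaths.pairsSet G u v := rfl
  rw [hgoal]
  omega
end
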